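/- arXiv:1506.04885 — 8 statements merged into one kernel-verified Lean document; each statement's English description precedes it below -/
import Mathlib

section
/- If A is a strictly positive N×N real matrix, u is a strictly positive vector, ρ a real number with A·u ≤ ρ·u componentwise and A·u ≠ ρ·u, then the spectral radius of A is strictly less than ρ. -/
open Matrix

/-- Spectral radius of a real square matrix: the maximum modulus of its complex eigenvalues. -/
noncomputable def specRad {N : ℕ} (A : Matrix (Fin N) (Fin N) ℝ) : ℝ :=
  sSup ((fun z : ℂ => ‖z‖) '' spectrum ℂ (A.map (Complex.ofReal)))

/-- The IRU-set (independent row uncertainty set) determined by row sets `rows i ⊆ ℝ^M`: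
all `N × M` matrices whose `i`-th row belongs to `rows i`. -/
def IRU {N M : ℕ} (rows : Fin N → Set (Fin M → ℝ)) : Set (Matrix (Fin N) (Fin M) ℝ) :=
  {A | ∀ i, A i ∈ rows i}

theorem stmt1 {N : ℕ} (A : Matrix (Fin N) (Fin N) ℝ) (u : Fin N → ℝ) (ρ : ℝ)
    (hA : ∀ i j, 0 < A i j) (hu : ∀ i, 0 < u i)
    (h : ∀ i, A.mulVec u i ≤ ρ * u i) (hne : A.mulVec u ≠ fun i => ρ * u i) :
    specRad A < ρ := by
  obtain rfl | hN := Nat.eq_zero_or_pos N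
  · exact absurd (Subsingleton.elim _ _) hne
  haveI : Nonempty (Fin N) := Fin.pos_iff_nonempty.mp hN
  set v : Fin N → ℝ := A.mulVec u with hv
  have hvpos : ∀ i, 0 < v i := by
    intro i
    apply Finset.sum_pos (fun j _ => mul_pos (hA i j) (hu j)) Finset.univ_nonempty
  -- strict inequality at some coordinate
  have hk : ∃ k, v k < ρ * u k := by
    by_contra hc
    push_neg at hc
    exact hne (funext fun i => le_antisymm (h i) (hc i))
  obtain ⟨k, hk⟩ := hk
  -- A v < ρ v strictly
  have hAv : ∀ i, A.mulVec v i < ρ * v i := by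
    intro i
    have h1 : A.mulVec v i = ∑ j, A i j * v j := rfl
    have h2 : ρ * v i = ∑ j, A i j * (ρ * u j) := by
      rw [hv]
      simp only [mulVec, dotProduct, Finset.mul_sum]
      congr 1; ext j; ring
    rw [h1, h2]
    apply Finset.sum_lt_sum
    · exact fun j _ => mul_le_mul_of_nonneg_left (h j) (hA i j).le
    · exact ⟨k, Finset.mem_univ k, mul_lt_mul_of_pos_left hk (hA i k)⟩
  -- define ρ'
  set ρ' : ℝ := Finset.univ.sup' Finset.univ_nonempty (fun i => A.mulVec v i / v i) with hρ'
  have hρ'le : ∀ i, A.mulVec v i ≤ ρ' * v i := by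
    intro i
    calc A.mulVec v i = (A.mulVec v i / v i) * v i := by
          rw [div_mul_cancel₀ _ (hvpos i).ne']
        _ ≤ ρ' * v i := mul_le_mul_of_nonneg_right
            (Finset.le_sup' (fun i => A.mulVec v i / v i) (Finset.mem_univ i)) (hvpos i).le
  have hρ'lt : ρ' < ρ := by
    rw [hρ', Finset.sup'_lt_iff]
    intro i _
    rw [div_lt_iff₀ (hvpos i)]
    exact hAv i
  have hρ'nn : 0 ≤ ρ' := by
    have hp : (0:ℝ) < A.mulVec v ⟨0, hN⟩ :=
      Finset.sum_pos (fun j _ => mul_pos (hA _ j) (hvpos j)) Finset.univ_nonempty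
    have h0 : (0:ℝ) ≤ A.mulVec v ⟨0, hN⟩ / v ⟨0, hN⟩ := div_nonneg hp.le (hvpos _).le
    exact h0.trans (Finset.le_sup' (fun i => A.mulVec v i / v i) (Finset.mem_univ _))
  -- every eigenvalue has modulus ≤ ρ'
  have key : ∀ μ ∈ spectrum ℂ (A.map Complex.ofReal), ‖μ‖ ≤ ρ' := by
    intro μ hμ
    rw [spectrum.mem_iff] at hμ
    have hdet : ((Matrix.scalar (Fin N)) μ - A.map Complex.ofReal).det = 0 := by
      by_contra hd
      exact hμ ((Matrix.isUnit_iff_isUnit_det _).mpr (isUnit_iff_ne_zero.mpr hd))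
    obtain ⟨x, hx0, hx⟩ := (Matrix.exists_mulVec_eq_zero_iff.mpr hdet)
    -- x is an eigenvector: (A.map ofReal).mulVec x = μ • x
    have heig : ∀ i, μ * x i = ∑ j, (A i j : ℂ) * x j := by
      intro i
      have := congrFun hx i
      simp only [sub_mulVec, Pi.sub_apply, Pi.zero_apply, sub_eq_zero] at this
      have h1 : ((Matrix.scalar (Fin N)) μ).mulVec x i = μ * x i := by
        rw [Matrix.scalar_apply, Matrix.mulVec_diagonal]
      rw [h1] at this
      rw [this]
      rfl
    -- choose the maximizing coordinate
    obtain ⟨i0, -, hi0⟩ := Finset.exists_max_image Finset.univ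
      (fun i => ‖x i‖ / v i) Finset.univ_nonempty
    set t : ℝ := ‖x i0‖ / v i0 with ht
    have htpos : 0 < t := by
      obtain ⟨j, hj⟩ := Function.ne_iff.mp hx0
      have : 0 < ‖x j‖ / v j :=
        div_pos (by simpa using hj) (hvpos j)
      exact this.trans_le (hi0 j (Finset.mem_univ j))
    have hxb : ∀ j, ‖x j‖ ≤ t * v j := by
      intro j
      have := hi0 j (Finset.mem_univ j)
      rw [div_le_iff₀ (hvpos j)] at this
      linarith [this]
    have hxi0 : ‖x i0‖ = t * v i0 := by
      rw [ht, div_mul_cancel₀ _ (hvpos i0).ne']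
    have hchain : ‖μ‖ * (t * v i0) ≤ ρ' * (t * v i0) := by
      calc ‖μ‖ * (t * v i0) = ‖μ‖ * ‖x i0‖ := by rw [hxi0]
        _ = ‖μ * x i0‖ := (norm_mul μ (x i0)).symm
        _ = ‖∑ j, (A i0 j : ℂ) * x j‖ := by rw [heig i0]
        _ ≤ ∑ j, ‖(A i0 j : ℂ) * x j‖ := norm_sum_le _ _
        _ ≤ ∑ j, A i0 j * (t * v j) := by
            apply Finset.sum_le_sum
            intro j _
            rw [norm_mul]
            have : ‖((A i0 j : ℂ))‖ = A i0 j := by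
              rw [Complex.norm_real, Real.norm_eq_abs, abs_of_pos (hA i0 j)]
            rw [this]
            exact mul_le_mul_of_nonneg_left (hxb j) (hA i0 j).le
        _ = t * ∑ j, A i0 j * v j := by rw [Finset.mul_sum]; congr 1; ext j; ring
        _ = t * A.mulVec v i0 := rfl
        _ ≤ t * (ρ' * v i0) := mul_le_mul_of_nonneg_left (hρ'le i0) htpos.le
        _ = ρ' * (t * v i0) := by ring
    exact le_of_mul_le_mul_right hchain (mul_pos htpos (hvpos i0))
  have : specRad A ≤ ρ' := by
    apply Real.sSup_le _ hρ'nn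
    rintro x ⟨μ, hμ, rfl⟩
    exact key μ hμ
  exact this.trans_lt hρ'lt
end

section
/- If A is a strictly positive N×N real matrix, u a nonzero nonnegative vector, ρ ≥ 0 with A·u ≥ ρ·u componentwise and A·u ≠ ρ·u, then the spectral radius of A is strictly greater than ρ. -/
open Matrix

section Aux

open Filter Topology
open scoped ENNReal NNReal

attribute [local instance] Matrix.linftyOpNormedAddCommGroup Matrix.linftyOpNormedRing
  Matrix.linftyOpNormedAlgebra

private lemma mulVec_pos' {N : ℕ} (A : Matrix (Fin N) (Fin N) ℝ) (x : Fin N → ℝ)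
    (hA : ∀ i j, 0 < A i j) (hx : ∀ i, 0 ≤ x i) (hxne : x ≠ 0) (i : Fin N) :
    0 < (A *ᵥ x) i := by
  obtain ⟨j, hj⟩ := Function.ne_iff.mp hxne
  refine Finset.sum_pos' (fun k _ => mul_nonneg (hA i k).le (hx k)) ⟨j, Finset.mem_univ j, ?_⟩
  exact mul_pos (hA i j) ((hx j).lt_of_ne (Ne.symm hj))

private lemma mulVec_mono' {N : ℕ} (A : Matrix (Fin N) (Fin N) ℝ)
    (hA : ∀ i j, 0 ≤ A i j) {x y : Fin N → ℝ} (hxy : ∀ i, x i ≤ y i) (i : Fin N) :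
    (A *ᵥ x) i ≤ (A *ᵥ y) i := by
  simp only [Matrix.mulVec, dotProduct]
  exact Finset.sum_le_sum fun j _ => mul_le_mul_of_nonneg_left (hxy j) (hA i j)

theorem stmt3 {N : ℕ} (A : Matrix (Fin N) (Fin N) ℝ) (u : Fin N → ℝ) (ρ : ℝ)
    (hA : ∀ i j, 0 < A i j) (hu : ∀ i, 0 ≤ u i) (hune : u ≠ 0) (hρ : 0 ≤ ρ)
    (h : ∀ i, ρ * u i ≤ A.mulVec u i) (hne : A.mulVec u ≠ fun i => ρ * u i) :
    ρ < specRad A := by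
  classical
  haveI hNE : Nonempty (Fin N) := by
    rcases Nat.eq_zero_or_pos N with h0 | h0
    · exact absurd (funext fun i => (h0 ▸ i).elim0) hune
    · exact ⟨⟨0, h0⟩⟩
  set v : Fin N → ℝ := A *ᵥ u with hv_def
  have hvpos : ∀ i, 0 < v i := mulVec_pos' A u hA hu hune
  set w : Fin N → ℝ := fun i => (A *ᵥ u) i - ρ * u i with hw_def
  have hw0 : ∀ i, 0 ≤ w i := fun i => sub_nonneg.mpr (h i)
  have hwne : w ≠ 0 := by
    intro hw
    apply hne
    funext i
    have := congrFun hw i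
    simp only [hw_def, Pi.zero_apply] at this
    linarith
  have hAwpos : ∀ i, 0 < (A *ᵥ w) i := mulVec_pos' A w hA hw0 hwne
  have hveq : v = ρ • u + w := by
    funext i
    simp only [Pi.add_apply, Pi.smul_apply, smul_eq_mul, hw_def, hv_def]
    ring
  have hAv : A *ᵥ v = ρ • v + A *ᵥ w := by
    conv_lhs => rw [hveq]
    rw [Matrix.mulVec_add, Matrix.mulVec_smul]
  -- choose ρ' > ρ with  ρ' * v ≤ A *ᵥ v  componentwise
  set ε : ℝ := Finset.univ.inf' Finset.univ_nonempty (fun i => (A *ᵥ w) i) with hε_def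
  have hε : 0 < ε := by
    rw [hε_def, Finset.lt_inf'_iff]
    exact fun i _ => hAwpos i
  set Mv : ℝ := Finset.univ.sup' Finset.univ_nonempty v with hMv_def
  have hvle : ∀ i, v i ≤ Mv := fun i => Finset.le_sup' v (Finset.mem_univ i)
  have hMv : 0 < Mv := lt_of_lt_of_le (hvpos (Classical.arbitrary _)) (hvle _)
  set ρ' : ℝ := ρ + ε / Mv with hρ'_def
  have hρ'ρ : ρ < ρ' := lt_add_of_pos_right _ (div_pos hε hMv)
  have hρ'pos : 0 < ρ' := hρ.trans_lt hρ'ρ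
  have key : ∀ i, ρ' * v i ≤ (A *ᵥ v) i := by
    intro i
    have h1 : (ε / Mv) * v i ≤ ε := by
      rw [div_mul_eq_mul_div, div_le_iff₀ hMv]
      exact mul_le_mul_of_nonneg_left (hvle i) hε.le
    have h2 : ε ≤ (A *ᵥ w) i := Finset.inf'_le _ (Finset.mem_univ i)
    have h3 := congrFun hAv i
    simp only [Pi.add_apply, Pi.smul_apply, smul_eq_mul] at h3
    rw [h3, hρ'_def]
    nlinarith
  -- iterate
  have hpow : ∀ n : ℕ, ∀ i, ρ' ^ n * v i ≤ ((A ^ n) *ᵥ v) i := by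
    intro n
    induction n with
    | zero => intro i; simp
    | succ n ih =>
      intro i
      have h2 : (A ^ (n + 1)) *ᵥ v = A *ᵥ ((A ^ n) *ᵥ v) := by
        rw [pow_succ', ← Matrix.mulVec_mulVec]
      have h4 : (A *ᵥ (ρ' ^ n • v)) i ≤ (A *ᵥ ((A ^ n) *ᵥ v)) i := by
        refine mulVec_mono' A (fun i j => (hA i j).le) (fun j => ?_) i
        simpa [smul_eq_mul] using ih j
      have h5 : (A *ᵥ (ρ' ^ n • v)) i = ρ' ^ n * (A *ᵥ v) i := by
        rw [Matrix.mulVec_smul]; simp [smul_eq_mul]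
      have h6 : ρ' ^ n * (ρ' * v i) ≤ ρ' ^ n * (A *ᵥ v) i :=
        mul_le_mul_of_nonneg_left (key i) (pow_nonneg hρ'pos.le n)
      calc ρ' ^ (n + 1) * v i = ρ' ^ n * (ρ' * v i) := by ring
        _ ≤ ρ' ^ n * (A *ᵥ v) i := h6
        _ = (A *ᵥ (ρ' ^ n • v)) i := h5.symm
        _ ≤ (A *ᵥ ((A ^ n) *ᵥ v)) i := h4
        _ = ((A ^ (n + 1)) *ᵥ v) i := by rw [h2]
  -- norm lower bound
  have hvne : v ≠ 0 := fun h0 => (hvpos (Classical.arbitrary _)).ne' (congrFun h0 _)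
  have hvnorm : 0 < ‖v‖ := norm_pos_iff.mpr hvne
  have hnorm : ∀ n : ℕ, ρ' ^ n ≤ ‖A ^ n‖ := by
    intro n
    have hρn : 0 < ρ' ^ n := pow_pos hρ'pos n
    have h1 : ‖v‖ ≤ ‖(A ^ n) *ᵥ v‖ / ρ' ^ n := by
      rw [pi_norm_le_iff_of_nonneg (by positivity)]
      intro i
      rw [Real.norm_eq_abs, abs_of_pos (hvpos i), le_div_iff₀ hρn]
      calc v i * ρ' ^ n = ρ' ^ n * v i := by ring
        _ ≤ ((A ^ n) *ᵥ v) i := hpow n i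
        _ ≤ |((A ^ n) *ᵥ v) i| := le_abs_self _
        _ ≤ ‖(A ^ n) *ᵥ v‖ := by simpa using norm_le_pi_norm ((A ^ n) *ᵥ v) i
    have h2 : ‖(A ^ n) *ᵥ v‖ ≤ ‖A ^ n‖ * ‖v‖ := Matrix.linfty_opNorm_mulVec _ _
    have h3 : ρ' ^ n * ‖v‖ ≤ ‖A ^ n‖ * ‖v‖ := by
      rw [le_div_iff₀ hρn] at h1
      nlinarith
    exact le_of_mul_le_mul_right h3 hvnorm
  -- pass to the complexification
  set a : Matrix (Fin N) (Fin N) ℂ := A.map Complex.ofReal with ha_def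
  have hmapnorm : ∀ n : ℕ, ‖a ^ n‖₊ = ‖A ^ n‖₊ := by
    intro n
    have hp : a ^ n = (A ^ n).map Complex.ofReal :=
      (map_pow (Complex.ofRealHom.mapMatrix (m := Fin N)) A n).symm
    rw [hp]
    simp [Matrix.linfty_opNNNorm_def, Matrix.map_apply]
  have hsr : ENNReal.ofReal ρ' ≤ spectralRadius ℂ a := by
    have T := spectrum.pow_nnnorm_pow_one_div_tendsto_nhds_spectralRadius a
    refine ge_of_tendsto T ?_
    filter_upwards [eventually_ge_atTop 1] with n hn
    have hn0 : (n : ℝ) ≠ 0 := by positivity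
    have h1 : (ENNReal.ofReal ρ') ^ n ≤ (‖a ^ n‖₊ : ℝ≥0∞) := by
      rw [hmapnorm n]
      calc (ENNReal.ofReal ρ') ^ n = ENNReal.ofReal (ρ' ^ n) :=
            (ENNReal.ofReal_pow hρ'pos.le n).symm
        _ ≤ ENNReal.ofReal ‖A ^ n‖ := ENNReal.ofReal_le_ofReal (hnorm n)
        _ = (‖A ^ n‖₊ : ℝ≥0∞) := ofReal_norm _
    have h2 := ENNReal.rpow_le_rpow h1 (by positivity : (0:ℝ) ≤ 1 / n)
    rwa [← ENNReal.rpow_natCast (ENNReal.ofReal ρ') n, ← ENNReal.rpow_mul,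
      mul_one_div, div_self hn0, ENNReal.rpow_one] at h2
  -- the spectral radius is bounded by specRad
  have hspec_ne : (spectrum ℂ a).Nonempty := spectrum.nonempty a
  have hcpt : IsCompact ((fun z : ℂ => ‖z‖) '' spectrum ℂ a) :=
    (spectrum.isCompact a).image continuous_norm
  have hbdd : BddAbove ((fun z : ℂ => ‖z‖) '' spectrum ℂ a) := hcpt.bddAbove
  have hS0 : 0 ≤ specRad A := by
    obtain ⟨k, hk⟩ := hspec_ne
    exact le_trans (norm_nonneg k) (le_csSup hbdd ⟨k, hk, rfl⟩)
  have hup : spectralRadius ℂ a ≤ ENNReal.ofReal (specRad A) := by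
    refine iSup₂_le fun k hk => ?_
    refine (ofReal_norm k).symm.trans_le ?_
    refine ENNReal.ofReal_le_ofReal ?_
    exact le_csSup hbdd ⟨k, hk, rfl⟩
  have hfin : ENNReal.ofReal ρ' ≤ ENNReal.ofReal (specRad A) := hsr.trans hup
  have hρ'S : ρ' ≤ specRad A := by
    rwa [ENNReal.ofReal_le_ofReal_iff hS0] at hfin
  exact hρ'ρ.trans_le hρ'S

end Aux
end

section
/- Hourglass alternative, part (i): Let 𝒜 be an IRU-set of N×M real matrices containing a matrix Ã with Ã·u = v for vectors u ∈ ℝ^M, v ∈ ℝ^N. Then either A·u ≥ v componentwise for all A ∈ 𝒜, or there exists Ā ∈ 𝒜 with Ā·u ≤ v componentwise and Ā·u ≠ v. -/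
open Matrix

theorem stmt4 {N M : ℕ} (rows : Fin N → Set (Fin M → ℝ))
    (Atil : Matrix (Fin N) (Fin M) ℝ) (hAtil : Atil ∈ IRU rows)
    (u : Fin M → ℝ) (v : Fin N → ℝ) (hv : Atil.mulVec u = v) :
    (∀ A ∈ IRU rows, ∀ i, v i ≤ A.mulVec u i) ∨
      (∃ Abar ∈ IRU rows, (∀ i, Abar.mulVec u i ≤ v i) ∧ Abar.mulVec u ≠ v) := by
  by_cases h : ∀ A ∈ IRU rows, ∀ i, v i ≤ A.mulVec u i
  · exact Or.inl h
  · right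
    push_neg at h
    obtain ⟨A, hA, i, hi⟩ := h
    refine ⟨Matrix.of (Function.update Atil i (A i)), ?_, ?_, ?_⟩
    · intro j
      by_cases hj : j = i
      · subst hj
        show Function.update Atil j (A j) j ∈ rows j
        simpa [Function.update_self j (A j) Atil] using hA j
      · show Function.update Atil i (A i) j ∈ rows j
        simpa [Function.update_of_ne hj (A i) Atil] using hAtil j
    · intro j
      by_cases hj : j = i
      · subst hj
        simp only [Matrix.mulVec, Matrix.of_apply, Function.update_self j (A j) Atil]
        exact le_of_lt hi
      · simp only [Matrix.mulVec, Matrix.of_apply, Function.update_of_ne hj (A i) Atil]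
        rw [← hv]; rfl
    · intro hcontra
      have : (Matrix.of (Function.update Atil i (A i))).mulVec u i = v i := by
        rw [hcontra]
      simp only [Matrix.mulVec, Matrix.of_apply, Function.update_self i (A i) Atil] at this
      have : A.mulVec u i = v i := this
      linarith
end

section
/- Hourglass alternative, part (ii): Let 𝒜 be an IRU-set of N×M real matrices containing a matrix Ã with Ã·u = v. Then either A·u ≤ v componentwise for all A ∈ 𝒜, or there exists Ā ∈ 𝒜 with Ā·u ≥ v componentwise and Ā·u ≠ v. -/
open Matrix

theorem stmt5 {N M : ℕ} (rows : Fin N → Set (Fin M → ℝ))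
    (Atil : Matrix (Fin N) (Fin M) ℝ) (hAtil : Atil ∈ IRU rows)
    (u : Fin M → ℝ) (v : Fin N → ℝ) (hv : Atil.mulVec u = v) :
    (∀ A ∈ IRU rows, ∀ i, A.mulVec u i ≤ v i) ∨
      (∃ Abar ∈ IRU rows, (∀ i, v i ≤ Abar.mulVec u i) ∧ Abar.mulVec u ≠ v) := by
  by_cases h : ∀ A ∈ IRU rows, ∀ i, A.mulVec u i ≤ v i
  · exact Or.inl h
  · right
    push_neg at h
    obtain ⟨A, hA, i, hi⟩ := h
    refine ⟨Matrix.of (fun j => if j = i then A j else Atil j), fun j => ?_, fun j => ?_, ?_⟩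
    · show (if j = i then A j else Atil j) ∈ rows j
      by_cases hj : j = i
      · subst hj; simpa using hA j
      · simpa [hj] using hAtil j
    · by_cases hj : j = i
      · subst hj; simpa [Matrix.mulVec, Matrix.of_apply] using hi.le
      · simp [Matrix.mulVec, Matrix.of_apply, hj, ← hv]
    · intro hcon
      have := congrFun hcon i
      simp [Matrix.mulVec, Matrix.of_apply] at this
      exact hi.ne' this
end

section
/- Minimax theorem for IRU-sets: if 𝒜 is a compact IRU-set of nonnegative N×M real matrices and ℬ is a compact IRU-set of nonnegative M×N real matrices, then min over A ∈ 𝒜 of max over B ∈ ℬ of ρ(A·B) equals max over B ∈ ℬ of min over A ∈ 𝒜 of ρ(A·B), where ρ denotes the spectral radius. -/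
open Matrix

open Filter Topology

noncomputable def nrm {n : ℕ} (A : Matrix (Fin n) (Fin n) ℝ) : ℝ :=
  ((Finset.univ.sup fun i => ∑ j, ‖A i j‖₊ : NNReal) : ℝ)

variable {n : ℕ}

lemma rowsum_le_nrm (A : Matrix (Fin n) (Fin n) ℝ) (i : Fin n) :
    ∑ j, |A i j| ≤ nrm A := by
  have h := Finset.le_sup (f := fun i => ∑ j, ‖A i j‖₊) (Finset.mem_univ i)
  have := NNReal.coe_le_coe.2 h
  rw [NNReal.coe_sum] at this
  simpa [nrm, Real.norm_eq_abs] using this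

lemma nrm_eq_sup' [Nonempty (Fin n)] (A : Matrix (Fin n) (Fin n) ℝ) :
    nrm A = Finset.univ.sup' Finset.univ_nonempty (fun i => ∑ j, |A i j|) := by
  rw [nrm, ← Finset.sup'_eq_sup Finset.univ_nonempty]
  rw [show ((Finset.univ.sup' Finset.univ_nonempty fun i => ∑ j, ‖A i j‖₊ : NNReal) : ℝ)
      = Finset.univ.sup' Finset.univ_nonempty
        (NNReal.toReal ∘ fun i => ∑ j, ‖A i j‖₊) from
    Finset.comp_sup'_eq_sup'_comp Finset.univ_nonempty _ (fun x y => by simp)]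
  congr 1
  ext i
  rw [Function.comp_apply, NNReal.coe_sum]
  exact Finset.sum_congr rfl fun j _ => by simp [Real.norm_eq_abs]
lemma pow_mulVec_ge {A : Matrix (Fin n) (Fin n) ℝ} (hA : ∀ i j, 0 ≤ A i j)
    {x : Fin n → ℝ} (hx : ∀ i, 0 ≤ x i) {lam : ℝ} (hlam : 0 ≤ lam)
    (h : ∀ i, lam * x i ≤ A.mulVec x i) (k : ℕ) :
    ∀ i, lam ^ k * x i ≤ (A ^ k).mulVec x i := by
  induction k with
  | zero => intro i; simp [Matrix.one_mulVec]
  | succ k ih =>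
      intro i
      have hAk : (A ^ (k+1)).mulVec x = A.mulVec ((A ^ k).mulVec x) := by
        rw [Matrix.mulVec_mulVec, ← pow_succ']
      rw [hAk]
      calc lam ^ (k+1) * x i = lam ^ k * (lam * x i) := by ring
        _ ≤ lam ^ k * A.mulVec x i :=
            mul_le_mul_of_nonneg_left (h i) (pow_nonneg hlam k)
        _ = ∑ j, A i j * (lam ^ k * x j) := by
            rw [Matrix.mulVec, dotProduct, Finset.mul_sum]
            exact Finset.sum_congr rfl fun j _ => by ring
        _ ≤ ∑ j, A i j * ((A ^ k).mulVec x j) :=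
            Finset.sum_le_sum fun j _ => mul_le_mul_of_nonneg_left (ih j) (hA i j)
        _ = A.mulVec ((A ^ k).mulVec x) i := rfl

lemma pow_entries_nonneg {A : Matrix (Fin n) (Fin n) ℝ} (hA : ∀ i j, 0 ≤ A i j) (k : ℕ) :
    ∀ i j, 0 ≤ (A ^ k) i j := by
  induction k with
  | zero => intro i j; rw [pow_zero]; rcases eq_or_ne i j with rfl | hij
            · simp
            · simp [Matrix.one_apply, hij]
  | succ k ih =>
      intro i j
      rw [pow_succ, Matrix.mul_apply]
      exact Finset.sum_le_sum (fun l _ => mul_nonneg (ih i l) (hA l j)) |>.trans_eq' (by simp)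

lemma lam_pow_le_nrm {A : Matrix (Fin n) (Fin n) ℝ} (hA : ∀ i j, 0 ≤ A i j)
    {x : Fin n → ℝ} (hx : ∀ i, 0 ≤ x i) (hx0 : x ≠ 0) {lam : ℝ} (hlam : 0 ≤ lam)
    (h : ∀ i, lam * x i ≤ A.mulVec x i) (k : ℕ) :
    lam ^ k ≤ nrm (A ^ k) := by
  obtain ⟨i1, hi1⟩ : ∃ i, x i ≠ 0 := Function.ne_iff.mp hx0
  obtain ⟨i0, _, hi0⟩ := Finset.exists_max_image Finset.univ x ⟨i1, Finset.mem_univ i1⟩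
  have hxi0 : 0 < x i0 :=
    lt_of_lt_of_le (lt_of_le_of_ne (hx i1) (Ne.symm hi1)) (hi0 i1 (Finset.mem_univ i1))
  have h1 : lam ^ k * x i0 ≤ (A ^ k).mulVec x i0 := pow_mulVec_ge hA hx hlam h k i0
  have h2 : (A ^ k).mulVec x i0 ≤ nrm (A ^ k) * x i0 := by
    calc (A ^ k).mulVec x i0 = ∑ j, (A ^ k) i0 j * x j := rfl
      _ ≤ ∑ j, (A ^ k) i0 j * x i0 := Finset.sum_le_sum fun j _ =>
          mul_le_mul_of_nonneg_left (hi0 j (Finset.mem_univ j)) (pow_entries_nonneg hA k i0 j)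
      _ = (∑ j, (A ^ k) i0 j) * x i0 := by rw [Finset.sum_mul]
      _ ≤ nrm (A ^ k) * x i0 := by
          apply mul_le_mul_of_nonneg_right _ (le_of_lt hxi0)
          calc ∑ j, (A ^ k) i0 j = ∑ j, |(A ^ k) i0 j| := by
                exact Finset.sum_congr rfl fun j _ => (abs_of_nonneg (pow_entries_nonneg hA k i0 j)).symm
            _ ≤ nrm (A ^ k) := rowsum_le_nrm _ i0
  exact le_of_mul_le_mul_right (h1.trans h2) hxi0

lemma eig_exists {A : Matrix (Fin n) (Fin n) ℂ} {z : ℂ} (hz : z ∈ spectrum ℂ A) :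
    ∃ v : Fin n → ℂ, v ≠ 0 ∧ A.mulVec v = z • v := by
  rw [spectrum.mem_iff] at hz
  rw [Matrix.isUnit_iff_isUnit_det, isUnit_iff_ne_zero, not_not] at hz
  obtain ⟨v, hv, hv2⟩ := (Matrix.exists_mulVec_eq_zero_iff).2 hz
  refine ⟨v, hv, ?_⟩
  rw [Matrix.sub_mulVec] at hv2
  have h2 : (algebraMap ℂ (Matrix (Fin n) (Fin n) ℂ) z).mulVec v = z • v := by
    ext i
    simp [Matrix.algebraMap_eq_diagonal, Matrix.mulVec_diagonal, Pi.algebraMap_apply,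
      Algebra.algebraMap_self_apply]
  rw [h2] at hv2
  have := sub_eq_zero.mp hv2
  exact this.symm

lemma specRad_le_CW_aux {A : Matrix (Fin n) (Fin n) ℝ} (hA : ∀ i j, 0 ≤ A i j)
    {x : Fin n → ℝ} (hx : ∀ i, 0 < x i) {lam : ℝ} (hlam : 0 ≤ lam)
    (h : ∀ i, A.mulVec x i ≤ lam * x i) :
    sSup ((fun z : ℂ => ‖z‖) '' spectrum ℂ (A.map (Complex.ofReal))) ≤ lam := by
  apply Real.sSup_le _ hlam
  rintro r ⟨z, hz, rfl⟩
  obtain ⟨v, hv, hveq⟩ := eig_exists hz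
  obtain ⟨i1, hi1⟩ : ∃ i, v i ≠ 0 := Function.ne_iff.mp hv
  have hptw : ∀ i, ‖z‖ * ‖v i‖ ≤ ∑ j, A i j * ‖v j‖ := by
    intro i
    have h1 : z * v i = ∑ j, (A i j : ℂ) * v j := by
      have := congrFun hveq i
      simpa [Matrix.mulVec, dotProduct, Matrix.map_apply] using this.symm
    calc ‖z‖ * ‖v i‖ = ‖z * v i‖ := (norm_mul _ _).symm
      _ = ‖∑ j, (A i j : ℂ) * v j‖ := by rw [h1]
      _ ≤ ∑ j, ‖(A i j : ℂ) * v j‖ :=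
          norm_sum_le _ _
      _ = ∑ j, A i j * ‖v j‖ := by
          apply Finset.sum_congr rfl
          intro j _
          rw [norm_mul, Complex.norm_real, Real.norm_eq_abs, abs_of_nonneg (hA i j)]
  obtain ⟨i0, _, hi0⟩ := Finset.exists_max_image Finset.univ (fun i => ‖v i‖ / x i)
    ⟨i1, Finset.mem_univ i1⟩
  set c := ‖v i0‖ / x i0 with hc
  have hcpos : 0 < c := lt_of_lt_of_le
    (div_pos (norm_pos_iff.mpr hi1) (hx i1)) (hi0 i1 (Finset.mem_univ i1))
  have hvc : ∀ i, ‖v i‖ ≤ c * x i := by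
    intro i
    have := hi0 i (Finset.mem_univ i)
    rw [div_le_iff₀ (hx i)] at this
    linarith [this]
  have hvi0 : ‖v i0‖ = c * x i0 := by
    rw [hc, div_mul_eq_mul_div, mul_div_assoc, div_self (ne_of_gt (hx i0)), mul_one]
  have key : ‖z‖ * (c * x i0) ≤ c * (lam * x i0) := by
    calc ‖z‖ * (c * x i0) = ‖z‖ * ‖v i0‖ := by rw [hvi0]
      _ ≤ ∑ j, A i0 j * ‖v j‖ := hptw i0
      _ ≤ ∑ j, A i0 j * (c * x j) := by
          apply Finset.sum_le_sum
          intro j _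
          exact mul_le_mul_of_nonneg_left (hvc j) (hA i0 j)
      _ = c * A.mulVec x i0 := by
          rw [Matrix.mulVec, dotProduct, Finset.mul_sum]
          exact Finset.sum_congr rfl fun j _ => by ring
      _ ≤ c * (lam * x i0) := mul_le_mul_of_nonneg_left (h i0) (le_of_lt hcpos)
  have hpos : 0 < c * x i0 := mul_pos hcpos (hx i0)
  have key2 : ‖z‖ * (c * x i0) ≤ lam * (c * x i0) := by
    calc ‖z‖ * (c * x i0) ≤ c * (lam * x i0) := key
      _ = lam * (c * x i0) := by ring
  exact le_of_mul_le_mul_right key2 hpos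


section SpecStuff
attribute [local instance] Matrix.linftyOpNormedAddCommGroup Matrix.linftyOpNormedRing
  Matrix.linftyOpNormedAlgebra

variable {n : ℕ}

lemma nrm_eq (A : Matrix (Fin n) (Fin n) ℝ) : nrm A = ‖A.map (Complex.ofReal)‖ := by
  rw [Matrix.linfty_opNorm_def, nrm]
  congr 1
  apply Finset.sup_congr rfl
  intro i _
  apply Finset.sum_congr rfl
  intro j _
  simp [Matrix.map_apply]

lemma map_pow_comm (A : Matrix (Fin n) (Fin n) ℝ) (k : ℕ) :
    (A ^ k).map (Complex.ofReal) = (A.map (Complex.ofReal)) ^ k := by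
  induction k with
  | zero => ext i j; simp [Matrix.map_apply, Matrix.one_apply, apply_ite]
  | succ k ih =>
      rw [pow_succ, pow_succ, ← ih]
      ext i j
      simp [Matrix.map_apply, Matrix.mul_apply]

lemma spec_compact (A : Matrix (Fin n) (Fin n) ℝ) :
    IsCompact ((fun z : ℂ => ‖z‖) '' spectrum ℂ (A.map (Complex.ofReal))) :=
  (spectrum.isCompact _).image continuous_norm

lemma specRad_nonneg (A : Matrix (Fin n) (Fin n) ℝ) : 0 ≤ specRad A :=
  Real.sSup_nonneg (by rintro r ⟨z, _, rfl⟩; exact norm_nonneg z)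

lemma specRad_mem [Nonempty (Fin n)] (A : Matrix (Fin n) (Fin n) ℝ) :
    ∃ z ∈ spectrum ℂ (A.map (Complex.ofReal)), ‖z‖ = specRad A := by
  have hne : ((fun z : ℂ => ‖z‖) '' spectrum ℂ (A.map (Complex.ofReal))).Nonempty :=
    (spectrum.nonempty _).image _
  obtain ⟨z, hz, hz2⟩ := (spec_compact A).sSup_mem hne
  exact ⟨z, hz, hz2⟩

lemma abs_le_specRad {A : Matrix (Fin n) (Fin n) ℝ} {z : ℂ}
    (hz : z ∈ spectrum ℂ (A.map (Complex.ofReal))) : ‖z‖ ≤ specRad A :=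
  le_csSup (spec_compact A).bddAbove ⟨z, hz, rfl⟩

lemma spectralRadius_eq [Nonempty (Fin n)] (A : Matrix (Fin n) (Fin n) ℝ) :
    spectralRadius ℂ (A.map (Complex.ofReal)) = ENNReal.ofReal (specRad A) := by
  obtain ⟨zm, hzm, hzm2⟩ := specRad_mem A
  apply le_antisymm
  · apply iSup₂_le
    intro z hz
    rw [← enorm_eq_nnnorm, ← ofReal_norm]
    exact ENNReal.ofReal_le_ofReal (abs_le_specRad hz)
  · rw [← hzm2, ofReal_norm, enorm_eq_nnnorm]
    exact le_iSup₂ (f := fun z (_ : z ∈ spectrum ℂ (A.map Complex.ofReal)) => (‖z‖₊ : ENNReal)) zm hzm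

lemma specRad_le_CW {A : Matrix (Fin n) (Fin n) ℝ} (hA : ∀ i j, 0 ≤ A i j)
    {x : Fin n → ℝ} (hx : ∀ i, 0 < x i) {lam : ℝ} (hlam : 0 ≤ lam)
    (h : ∀ i, A.mulVec x i ≤ lam * x i) : specRad A ≤ lam :=
  specRad_le_CW_aux hA hx hlam h

lemma specRad_pow_le [Nonempty (Fin n)] (A : Matrix (Fin n) (Fin n) ℝ) (k : ℕ) :
    specRad A ^ k ≤ nrm (A ^ k) := by
  obtain ⟨z, hz, habs⟩ := specRad_mem A
  have hzk : z ^ k ∈ spectrum ℂ ((A.map Complex.ofReal) ^ k) := by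
    have := spectrum.subset_polynomial_aeval (A.map Complex.ofReal) (Polynomial.X ^ k : Polynomial ℂ)
    have hmem : z ^ k ∈ (fun x => Polynomial.eval x ((Polynomial.X : Polynomial ℂ) ^ k)) ''
        spectrum ℂ (A.map Complex.ofReal) := ⟨z, hz, by simp⟩
    simpa using this hmem
  calc specRad A ^ k = ‖z ^ k‖ := by rw [norm_pow, habs]
    _ ≤ ‖(A.map Complex.ofReal) ^ k‖ := by
        exact spectrum.norm_le_norm_of_mem hzk
    _ = nrm (A ^ k) := by rw [nrm_eq, map_pow_comm]

lemma CW_le_specRad [Nonempty (Fin n)] {A : Matrix (Fin n) (Fin n) ℝ} (hA : ∀ i j, 0 ≤ A i j)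
    {x : Fin n → ℝ} (hx : ∀ i, 0 ≤ x i) (hx0 : x ≠ 0) {lam : ℝ} (hlam : 0 ≤ lam)
    (h : ∀ i, lam * x i ≤ A.mulVec x i) : lam ≤ specRad A := by
  by_contra hlt
  push_neg at hlt
  have hlampos : 0 < lam := lt_of_le_of_lt (specRad_nonneg A) hlt
  have gel := spectrum.pow_nnnorm_pow_one_div_tendsto_nhds_spectralRadius (A.map Complex.ofReal)
  rw [spectralRadius_eq] at gel
  have hlt' : ENNReal.ofReal (specRad A) < ENNReal.ofReal lam :=
    (ENNReal.ofReal_lt_ofReal_iff hlampos).2 hlt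
  obtain ⟨k, hk1, hk2⟩ := ((gel.eventually_lt_const hlt').and (eventually_ge_atTop 1)).exists
  have hk0 : (k : ℝ) ≠ 0 := Nat.cast_ne_zero.2 (by omega)
  have h1 : ((‖(A.map Complex.ofReal) ^ k‖₊ : ENNReal) ^ ((1 : ℝ)/(k : ℝ))) ^ (k : ℕ)
      < (ENNReal.ofReal lam) ^ (k : ℕ) :=
    ENNReal.pow_lt_pow_left (by omega) hk1
  rw [← ENNReal.rpow_natCast (((‖(A.map Complex.ofReal) ^ k‖₊ : ENNReal)) ^ ((1:ℝ)/(k:ℝ))) k,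
    ← ENNReal.rpow_mul, one_div, inv_mul_cancel₀ hk0, ENNReal.rpow_one,
    ← ENNReal.ofReal_pow hlam] at h1
  · have h2 : ‖(A.map Complex.ofReal) ^ k‖ < lam ^ k := by
      have := ENNReal.toReal_strict_mono ENNReal.ofReal_ne_top h1
      rwa [ENNReal.coe_toReal, ENNReal.toReal_ofReal (by positivity), coe_nnnorm] at this
    have h3 : lam ^ k ≤ nrm (A ^ k) := lam_pow_le_nrm hA hx hx0 hlam h k
    rw [nrm_eq, map_pow_comm] at h3
    exact absurd (lt_of_le_of_lt h3 h2) (lt_irrefl _)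

lemma pow_entry_tendsto (Ms : ℕ → Matrix (Fin n) (Fin n) ℝ) (Mi : Matrix (Fin n) (Fin n) ℝ)
    (h : ∀ i j, Tendsto (fun m => Ms m i j) atTop (𝓝 (Mi i j))) (k : ℕ) :
    ∀ i j, Tendsto (fun m => (Ms m ^ k) i j) atTop (𝓝 ((Mi ^ k) i j)) := by
  induction k with
  | zero =>
      intro i j
      simp only [pow_zero]
      exact tendsto_const_nhds
  | succ k ih =>
      intro i j
      simp only [pow_succ, Matrix.mul_apply]
      exact tendsto_finset_sum _ fun l _ => (ih i l).mul (h l j)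

lemma nrm_tendsto [Nonempty (Fin n)] (Xs : ℕ → Matrix (Fin n) (Fin n) ℝ)
    (Xi : Matrix (Fin n) (Fin n) ℝ)
    (h : ∀ i j, Tendsto (fun m => Xs m i j) atTop (𝓝 (Xi i j))) :
    Tendsto (fun m => nrm (Xs m)) atTop (𝓝 (nrm Xi)) := by
  simp only [nrm_eq_sup']
  exact Filter.Tendsto.finset_sup'_nhds_apply Finset.univ_nonempty
    (fun i _ => tendsto_finset_sum _ fun j _ => (h i j).abs)

lemma specRad_usc [Nonempty (Fin n)] (Ms : ℕ → Matrix (Fin n) (Fin n) ℝ)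
    (Mi : Matrix (Fin n) (Fin n) ℝ)
    (hconv : ∀ i j, Tendsto (fun m => Ms m i j) atTop (𝓝 (Mi i j)))
    (lam : ℕ → ℝ) (l : ℝ) (hlam : Tendsto lam atTop (𝓝 l))
    (hle : ∀ m, lam m ≤ specRad (Ms m)) : l ≤ specRad Mi := by
  by_contra hl
  push_neg at hl
  set δ : ℝ := (l - specRad Mi) / 2 with hδdef
  have hδ : 0 < δ := by simp only [hδdef]; linarith
  have hpos : 0 < specRad Mi + δ := by
    have := specRad_nonneg Mi
    linarith
  have gel := spectrum.pow_nnnorm_pow_one_div_tendsto_nhds_spectralRadius (Mi.map Complex.ofReal)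
  rw [spectralRadius_eq] at gel
  have hlt' : ENNReal.ofReal (specRad Mi) < ENNReal.ofReal (specRad Mi + δ) :=
    (ENNReal.ofReal_lt_ofReal_iff hpos).2 (by linarith)
  obtain ⟨k, hk1, hk2⟩ := ((gel.eventually_lt_const hlt').and (eventually_ge_atTop 1)).exists
  have hk0 : (k : ℝ) ≠ 0 := Nat.cast_ne_zero.2 (by omega)
  have h1 : ((‖(Mi.map Complex.ofReal) ^ k‖₊ : ENNReal) ^ ((1 : ℝ)/(k : ℝ))) ^ (k : ℕ)
      < (ENNReal.ofReal (specRad Mi + δ)) ^ (k : ℕ) :=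
    ENNReal.pow_lt_pow_left (by omega) hk1
  rw [← ENNReal.rpow_natCast (((‖(Mi.map Complex.ofReal) ^ k‖₊ : ENNReal)) ^ ((1:ℝ)/(k:ℝ))) k,
    ← ENNReal.rpow_mul, one_div, inv_mul_cancel₀ hk0, ENNReal.rpow_one,
    ← ENNReal.ofReal_pow hpos.le] at h1
  have h2 : nrm (Mi ^ k) < (specRad Mi + δ) ^ k := by
    have := ENNReal.toReal_strict_mono ENNReal.ofReal_ne_top h1
    rwa [ENNReal.coe_toReal, ENNReal.toReal_ofReal (by positivity), coe_nnnorm,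
      ← map_pow_comm, ← nrm_eq] at this
  have hnt := nrm_tendsto (fun m => Ms m ^ k) (Mi ^ k) (pow_entry_tendsto Ms Mi hconv k)
  have hev2 := hnt.eventually_lt_const h2
  have hfin : l ≤ specRad Mi + δ := by
    apply le_of_tendsto hlam
    apply hev2.mono
    intro m hm
    have hsm : specRad (Ms m) ^ k < (specRad Mi + δ) ^ k :=
      lt_of_le_of_lt (specRad_pow_le (Ms m) k) hm
    have := lt_of_pow_lt_pow_left₀ k hpos.le hsm
    linarith [hle m]
  simp only [hδdef] at hfin
  linarith

end SpecStuff

lemma IRU_nonempty {N M : ℕ} {rows : Fin N → Set (Fin M → ℝ)} (hne : ∀ i, (rows i).Nonempty) :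
    (IRU rows).Nonempty := ⟨fun i => (hne i).choose, fun i => (hne i).choose_spec⟩

lemma IRU_compact {N M : ℕ} {rows : Fin N → Set (Fin M → ℝ)} (hcomp : ∀ i, IsCompact (rows i)) :
    IsCompact (IRU rows) := by
  have : IRU rows = Set.pi Set.univ rows := by
    ext A
    simp only [IRU, Set.mem_setOf_eq, Set.mem_pi, Set.mem_univ, forall_true_left]
    exact ⟨fun h i _ => h i, fun h i => h i trivial⟩
  rw [this]
  exact isCompact_univ_pi hcomp

private example {N M : ℕ} (X : ℕ → Matrix (Fin N) (Fin M) ℝ) (L : Matrix (Fin N) (Fin M) ℝ)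
    (h : Tendsto X atTop (𝓝 L)) (i : Fin N) (j : Fin M) :
    Tendsto (fun m => X m i j) atTop (𝓝 (L i j)) := by
  have : Continuous fun (A : Matrix (Fin N) (Fin M) ℝ) => A i j := by
    exact (continuous_apply j).comp (continuous_apply i)
  exact (this.tendsto L).comp h

lemma rows_bound {k l : ℕ} (rows : Fin k → Set (Fin l → ℝ)) (hcomp : ∀ i, IsCompact (rows i)) :
    ∃ R : ℝ, 0 ≤ R ∧ ∀ i, ∀ a ∈ rows i, ∀ j, |a j| ≤ R := by
  have h : ∀ i, ∃ r : ℝ, ∀ a ∈ rows i, ∀ j, |a j| ≤ r := by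
    intro i
    obtain ⟨r, hr⟩ := (hcomp i).isBounded.subset_closedBall 0
    refine ⟨r, fun a ha j => ?_⟩
    have h1 : dist a 0 ≤ r := Metric.mem_closedBall.mp (hr ha)
    calc |a j| = ‖a j‖ := rfl
      _ ≤ ‖a‖ := norm_le_pi_norm a j
      _ = dist a 0 := by rw [dist_zero_right]
      _ ≤ r := h1
  choose r hr using h
  refine ⟨∑ i, |r i|, Finset.sum_nonneg fun i _ => abs_nonneg _, fun i a ha j => ?_⟩
  calc |a j| ≤ r i := hr i a ha j
    _ ≤ |r i| := le_abs_self _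
    _ ≤ ∑ i', |r i'| := Finset.single_le_sum (f := fun i' => |r i'|)
        (fun i' _ => abs_nonneg _) (Finset.mem_univ i)

variable {n : ℕ}

lemma dot_continuous (x : Fin n → ℝ) : Continuous fun b : Fin n → ℝ => b ⬝ᵥ x :=
  continuous_finset_sum _ fun i _ => (continuous_apply i).mul continuous_const

noncomputable def maxDot (K : Set (Fin n → ℝ)) (x : Fin n → ℝ) : ℝ :=
  sSup ((fun b => b ⬝ᵥ x) '' K)

noncomputable def minDot (K : Set (Fin n → ℝ)) (x : Fin n → ℝ) : ℝ :=
  sInf ((fun b => b ⬝ᵥ x) '' K)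

variable {K : Set (Fin n → ℝ)} (hK : IsCompact K) (hne : K.Nonempty)

include hK hne in
lemma maxDot_attained (x : Fin n → ℝ) : ∃ b ∈ K, b ⬝ᵥ x = maxDot K x := by
  obtain ⟨b, hb, heq⟩ := (hK.image (dot_continuous x)).sSup_mem (hne.image _)
  exact ⟨b, hb, heq⟩

include hK in
lemma le_maxDot {b : Fin n → ℝ} (hb : b ∈ K) (x : Fin n → ℝ) : b ⬝ᵥ x ≤ maxDot K x :=
  le_csSup (hK.image (dot_continuous x)).bddAbove ⟨b, hb, rfl⟩

include hK hne in
lemma minDot_attained (x : Fin n → ℝ) : ∃ b ∈ K, b ⬝ᵥ x = minDot K x := by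
  obtain ⟨b, hb, heq⟩ := (hK.image (dot_continuous x)).sInf_mem (hne.image _)
  exact ⟨b, hb, heq⟩

include hK in
lemma minDot_le {b : Fin n → ℝ} (hb : b ∈ K) (x : Fin n → ℝ) : minDot K x ≤ b ⬝ᵥ x :=
  csInf_le (hK.image (dot_continuous x)).bddBelow ⟨b, hb, rfl⟩

include hK hne in
lemma maxDot_mono (hKnn : ∀ b ∈ K, ∀ j, 0 ≤ b j) {x y : Fin n → ℝ} (hxy : ∀ i, x i ≤ y i) :
    maxDot K x ≤ maxDot K y := by
  obtain ⟨b, hb, hbx⟩ := maxDot_attained hK hne x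
  rw [← hbx]
  calc b ⬝ᵥ x ≤ b ⬝ᵥ y :=
        Finset.sum_le_sum fun i _ => mul_le_mul_of_nonneg_left (hxy i) (hKnn b hb i)
    _ ≤ maxDot K y := le_maxDot hK hb y

include hK hne in
lemma minDot_mono (hKnn : ∀ b ∈ K, ∀ j, 0 ≤ b j) {x y : Fin n → ℝ} (hxy : ∀ i, x i ≤ y i) :
    minDot K x ≤ minDot K y := by
  obtain ⟨b, hb, hby⟩ := minDot_attained hK hne y
  rw [← hby]
  calc minDot K x ≤ b ⬝ᵥ x := minDot_le hK hb x
    _ ≤ b ⬝ᵥ y := Finset.sum_le_sum fun i _ => mul_le_mul_of_nonneg_left (hxy i) (hKnn b hb i)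

include hK hne in
lemma maxDot_nonneg (hKnn : ∀ b ∈ K, ∀ j, 0 ≤ b j) {x : Fin n → ℝ} (hx : ∀ i, 0 ≤ x i) :
    0 ≤ maxDot K x := by
  obtain ⟨b, hb⟩ := hne
  refine le_trans ?_ (le_maxDot hK hb x)
  exact Finset.sum_nonneg fun i _ => mul_nonneg (hKnn b hb i) (hx i)

include hK hne in
lemma minDot_nonneg (hKnn : ∀ b ∈ K, ∀ j, 0 ≤ b j) {x : Fin n → ℝ} (hx : ∀ i, 0 ≤ x i) :
    0 ≤ minDot K x := by
  obtain ⟨b, hb, hbx⟩ := minDot_attained hK hne x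
  rw [← hbx]
  exact Finset.sum_nonneg fun i _ => mul_nonneg (hKnn b hb i) (hx i)

include hK hne in
lemma maxDot_smul {c : ℝ} (hc : 0 < c) (x : Fin n → ℝ) :
    maxDot K (c • x) = c * maxDot K x := by
  obtain ⟨b0, hb0, hb0x⟩ := maxDot_attained hK hne x
  obtain ⟨b1, hb1, hb1x⟩ := maxDot_attained hK hne (c • x)
  apply le_antisymm
  · rw [← hb1x]
    have : b1 ⬝ᵥ (c • x) = c * (b1 ⬝ᵥ x) := by
      simp [dotProduct, Finset.mul_sum]
      exact Finset.sum_congr rfl fun i _ => by ring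
    rw [this]
    exact mul_le_mul_of_nonneg_left (le_maxDot hK hb1 x) hc.le
  · rw [← hb0x]
    have : c * (b0 ⬝ᵥ x) = b0 ⬝ᵥ (c • x) := by
      simp [dotProduct, Finset.mul_sum]
      exact Finset.sum_congr rfl fun i _ => by ring
    rw [this]
    exact le_maxDot hK hb0 (c • x)

include hK hne in
lemma minDot_smul {c : ℝ} (hc : 0 < c) (x : Fin n → ℝ) :
    minDot K (c • x) = c * minDot K x := by
  obtain ⟨b0, hb0, hb0x⟩ := minDot_attained hK hne x
  obtain ⟨b1, hb1, hb1x⟩ := minDot_attained hK hne (c • x)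
  apply le_antisymm
  · rw [← hb0x]
    have : c * (b0 ⬝ᵥ x) = b0 ⬝ᵥ (c • x) := by
      simp [dotProduct, Finset.mul_sum]
      exact Finset.sum_congr rfl fun i _ => by ring
    rw [this]
    exact minDot_le hK hb0 (c • x)
  · rw [← hb1x]
    have : b1 ⬝ᵥ (c • x) = c * (b1 ⬝ᵥ x) := by
      simp [dotProduct, Finset.mul_sum]
      exact Finset.sum_congr rfl fun i _ => by ring
    rw [this]
    exact mul_le_mul_of_nonneg_left (minDot_le hK hb1 x) hc.le

include hK hne in
lemma maxDot_sub_le {R : ℝ} (hR : ∀ b ∈ K, ∀ j, |b j| ≤ R) (x y : Fin n → ℝ) :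
    maxDot K x ≤ maxDot K y + R * ∑ i, |x i - y i| := by
  obtain ⟨b, hb, hbx⟩ := maxDot_attained hK hne x
  rw [← hbx]
  have h1 : b ⬝ᵥ x ≤ b ⬝ᵥ y + R * ∑ i, |x i - y i| := by
    have : b ⬝ᵥ x - b ⬝ᵥ y = ∑ i, b i * (x i - y i) := by
      rw [dotProduct, dotProduct, ← Finset.sum_sub_distrib]
      exact Finset.sum_congr rfl fun i _ => by ring
    have h2 : ∑ i, b i * (x i - y i) ≤ R * ∑ i, |x i - y i| := by
      rw [Finset.mul_sum]
      apply Finset.sum_le_sum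
      intro i _
      calc b i * (x i - y i) ≤ |b i * (x i - y i)| := le_abs_self _
        _ = |b i| * |x i - y i| := abs_mul _ _
        _ ≤ R * |x i - y i| := mul_le_mul_of_nonneg_right (hR b hb i) (abs_nonneg _)
    linarith [this, h2]
  exact h1.trans (by linarith [le_maxDot hK hb y])

include hK hne in
lemma minDot_sub_le {R : ℝ} (hR : ∀ b ∈ K, ∀ j, |b j| ≤ R) (x y : Fin n → ℝ) :
    minDot K x ≤ minDot K y + R * ∑ i, |x i - y i| := by
  obtain ⟨b, hb, hby⟩ := minDot_attained hK hne y
  have h1 : b ⬝ᵥ x ≤ b ⬝ᵥ y + R * ∑ i, |x i - y i| := by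
    have heq : b ⬝ᵥ x - b ⬝ᵥ y = ∑ i, b i * (x i - y i) := by
      rw [dotProduct, dotProduct, ← Finset.sum_sub_distrib]
      exact Finset.sum_congr rfl fun i _ => by ring
    have h2 : ∑ i, b i * (x i - y i) ≤ R * ∑ i, |x i - y i| := by
      rw [Finset.mul_sum]
      apply Finset.sum_le_sum
      intro i _
      calc b i * (x i - y i) ≤ |b i * (x i - y i)| := le_abs_self _
        _ = |b i| * |x i - y i| := abs_mul _ _
        _ ≤ R * |x i - y i| := mul_le_mul_of_nonneg_right (hR b hb i) (abs_nonneg _)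
    linarith [heq, h2]
  calc minDot K x ≤ b ⬝ᵥ x := minDot_le hK hb x
    _ ≤ b ⬝ᵥ y + R * ∑ i, |x i - y i| := h1
    _ = minDot K y + R * ∑ i, |x i - y i| := by rw [hby]

lemma sum_abs_tendsto_zero (xs : ℕ → (Fin n → ℝ)) (xi : Fin n → ℝ)
    (h : ∀ i, Tendsto (fun m => xs m i) atTop (𝓝 (xi i))) :
    Tendsto (fun m => ∑ i, |xs m i - xi i|) atTop (𝓝 0) := by
  have : Tendsto (fun m => ∑ i, |xs m i - xi i|) atTop (𝓝 (∑ i : Fin n, |xi i - xi i|)) :=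
    tendsto_finset_sum _ fun i _ => ((h i).sub tendsto_const_nhds).abs
  simpa using this

include hK hne in
lemma maxDot_tendsto {R : ℝ} (hR : ∀ b ∈ K, ∀ j, |b j| ≤ R)
    (xs : ℕ → (Fin n → ℝ)) (xi : Fin n → ℝ)
    (h : ∀ i, Tendsto (fun m => xs m i) atTop (𝓝 (xi i))) :
    Tendsto (fun m => maxDot K (xs m)) atTop (𝓝 (maxDot K xi)) := by
  have hS := sum_abs_tendsto_zero xs xi h
  have hup : ∀ m, maxDot K (xs m) ≤ maxDot K xi + R * ∑ i, |xs m i - xi i| := fun m =>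
    maxDot_sub_le hK hne hR (xs m) xi
  have hlo : ∀ m, maxDot K xi - R * ∑ i, |xs m i - xi i| ≤ maxDot K (xs m) := by
    intro m
    have := maxDot_sub_le hK hne hR xi (xs m)
    have heq : ∑ i, |xi i - xs m i| = ∑ i, |xs m i - xi i| :=
      Finset.sum_congr rfl fun i _ => abs_sub_comm _ _
    rw [heq] at this
    linarith
  have h1 : Tendsto (fun m => maxDot K xi - R * ∑ i, |xs m i - xi i|) atTop (𝓝 (maxDot K xi)) := by
    have := (tendsto_const_nhds (x := maxDot K xi) (f := atTop (α := ℕ))).sub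
      ((tendsto_const_nhds (x := R) (f := atTop (α := ℕ))).mul hS)
    simpa using this
  have h2 : Tendsto (fun m => maxDot K xi + R * ∑ i, |xs m i - xi i|) atTop (𝓝 (maxDot K xi)) := by
    have := (tendsto_const_nhds (x := maxDot K xi) (f := atTop (α := ℕ))).add
      ((tendsto_const_nhds (x := R) (f := atTop (α := ℕ))).mul hS)
    simpa using this
  exact tendsto_of_tendsto_of_tendsto_of_le_of_le h1 h2 hlo hup

include hK hne in
lemma minDot_tendsto {R : ℝ} (hR : ∀ b ∈ K, ∀ j, |b j| ≤ R)
    (xs : ℕ → (Fin n → ℝ)) (xi : Fin n → ℝ)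
    (h : ∀ i, Tendsto (fun m => xs m i) atTop (𝓝 (xi i))) :
    Tendsto (fun m => minDot K (xs m)) atTop (𝓝 (minDot K xi)) := by
  have hS := sum_abs_tendsto_zero xs xi h
  have hup : ∀ m, minDot K (xs m) ≤ minDot K xi + R * ∑ i, |xs m i - xi i| := fun m =>
    minDot_sub_le hK hne hR (xs m) xi
  have hlo : ∀ m, minDot K xi - R * ∑ i, |xs m i - xi i| ≤ minDot K (xs m) := by
    intro m
    have := minDot_sub_le hK hne hR xi (xs m)
    have heq : ∑ i, |xi i - xs m i| = ∑ i, |xs m i - xi i| :=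
      Finset.sum_congr rfl fun i _ => abs_sub_comm _ _
    rw [heq] at this
    linarith
  have h1 : Tendsto (fun m => minDot K xi - R * ∑ i, |xs m i - xi i|) atTop (𝓝 (minDot K xi)) := by
    have := (tendsto_const_nhds (x := minDot K xi) (f := atTop (α := ℕ))).sub
      ((tendsto_const_nhds (x := R) (f := atTop (α := ℕ))).mul hS)
    simpa using this
  have h2 : Tendsto (fun m => minDot K xi + R * ∑ i, |xs m i - xi i|) atTop (𝓝 (minDot K xi)) := by
    have := (tendsto_const_nhds (x := minDot K xi) (f := atTop (α := ℕ))).add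
      ((tendsto_const_nhds (x := R) (f := atTop (α := ℕ))).mul hS)
    simpa using this
  exact tendsto_of_tendsto_of_tendsto_of_le_of_le h1 h2 hlo hup

section Game

variable {N M : ℕ}

noncomputable def psiF (rowsB : Fin M → Set (Fin N → ℝ)) (ε : ℝ) (x : Fin N → ℝ) :
    Fin M → ℝ :=
  fun j => maxDot (rowsB j) x + ε * ∑ i, x i

noncomputable def TF (rowsA : Fin N → Set (Fin M → ℝ)) (rowsB : Fin M → Set (Fin N → ℝ))
    (ε : ℝ) (x : Fin N → ℝ) : Fin N → ℝ :=
  fun i => minDot (rowsA i) (psiF rowsB ε x) + ε * ∑ j, psiF rowsB ε x j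

variable {rowsA : Fin N → Set (Fin M → ℝ)} {rowsB : Fin M → Set (Fin N → ℝ)}
variable (hAne : ∀ i, (rowsA i).Nonempty) (hAcomp : ∀ i, IsCompact (rowsA i))
variable (hAnn : ∀ i, ∀ a ∈ rowsA i, ∀ j, 0 ≤ a j)
variable (hBne : ∀ i, (rowsB i).Nonempty) (hBcomp : ∀ i, IsCompact (rowsB i))
variable (hBnn : ∀ i, ∀ b ∈ rowsB i, ∀ j, 0 ≤ b j)
variable {RA RB : ℝ}
variable (hRA : ∀ i, ∀ a ∈ rowsA i, ∀ j, |a j| ≤ RA) (hRB : ∀ i, ∀ b ∈ rowsB i, ∀ j, |b j| ≤ RB)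
variable {ε : ℝ} (hε : 0 < ε) (hε1 : ε ≤ 1)

include hBne hBcomp hBnn in
lemma psi_nonneg {x : Fin N → ℝ} (hx : ∀ i, 0 ≤ x i) (j : Fin M) (hεnn : 0 ≤ ε) :
    0 ≤ psiF rowsB ε x j := by
  have h1 := maxDot_nonneg (hBcomp j) (hBne j) (hBnn j) hx
  have h2 : 0 ≤ ε * ∑ i, x i := mul_nonneg hεnn (Finset.sum_nonneg fun i _ => hx i)
  simp only [psiF]; linarith

include hBne hBcomp in
lemma psi_ge {x : Fin N → ℝ} (hx : ∀ i, 0 ≤ x i) (hsum : ∑ i, x i = 1)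
    (hBnn' : ∀ i, ∀ b ∈ rowsB i, ∀ j, 0 ≤ b j) (hεnn : 0 ≤ ε) (j : Fin M) :
    ε ≤ psiF rowsB ε x j := by
  have h1 := maxDot_nonneg (hBcomp j) (hBne j) (hBnn' j) hx
  simp only [psiF, hsum, mul_one]; linarith

include hBne hBcomp hRB in
lemma psi_le {x : Fin N → ℝ} (hx : ∀ i, 0 ≤ x i) (hsum : ∑ i, x i = 1) (hεnn : 0 ≤ ε)
    (j : Fin M) : psiF rowsB ε x j ≤ RB + ε := by
  obtain ⟨b, hb, hbx⟩ := maxDot_attained (hBcomp j) (hBne j) x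
  have h1 : b ⬝ᵥ x ≤ RB := by
    calc b ⬝ᵥ x ≤ ∑ i, RB * x i :=
          Finset.sum_le_sum fun i _ => mul_le_mul_of_nonneg_right
            ((le_abs_self _).trans (hRB j b hb i)) (hx i)
      _ = RB := by rw [← Finset.mul_sum, hsum, mul_one]
  simp only [psiF, hsum, mul_one]
  linarith [hbx ▸ h1]

include hAne hAcomp hAnn hBne hBcomp hBnn in
lemma T_ge [Nonempty (Fin M)] {x : Fin N → ℝ} (hx : ∀ i, 0 ≤ x i) (hsum : ∑ i, x i = 1)
    (hεpos : 0 < ε) (i : Fin N) : ε * (M * ε) ≤ TF rowsA rowsB ε x i := by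
  have h1 : 0 ≤ minDot (rowsA i) (psiF rowsB ε x) :=
    minDot_nonneg (hAcomp i) (hAne i) (hAnn i)
      (fun j => psi_nonneg hBne hBcomp hBnn hx j hεpos.le)
  have h2 : M * ε ≤ ∑ j, psiF rowsB ε x j := by
    calc (M : ℝ) * ε = ∑ _j : Fin M, ε := by
          rw [Finset.sum_const, Finset.card_univ, Fintype.card_fin, nsmul_eq_mul]
      _ ≤ ∑ j, psiF rowsB ε x j :=
          Finset.sum_le_sum fun j _ => psi_ge hBne hBcomp hx hsum hBnn hεpos.le j
  simp only [TF]
  nlinarith [mul_le_mul_of_nonneg_left h2 hεpos.le]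

include hAne hAcomp hAnn hBne hBcomp hBnn hRA hRB in
lemma T_le {RA0 : 0 ≤ RA} {RB0 : 0 ≤ RB} {x : Fin N → ℝ} (hx : ∀ i, 0 ≤ x i)
    (hsum : ∑ i, x i = 1) (hεpos : 0 < ε) (hε1' : ε ≤ 1) (i : Fin N) :
    TF rowsA rowsB ε x i ≤ (RA + 1) * (M * (RB + 1)) := by
  have hψnn : ∀ j, 0 ≤ psiF rowsB ε x j :=
    fun j => psi_nonneg hBne hBcomp hBnn hx j hεpos.le
  have hψle : ∀ j, psiF rowsB ε x j ≤ RB + 1 := by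
    intro j
    have := psi_le hBne hBcomp hRB hx hsum hεpos.le j
    linarith
  have hSps : ∑ j, psiF rowsB ε x j ≤ M * (RB + 1) := by
    calc ∑ j, psiF rowsB ε x j ≤ ∑ _j : Fin M, (RB + 1) := by
          apply Finset.sum_le_sum
          intro j _
          exact hψle j
      _ = M * (RB + 1) := by
          rw [Finset.sum_const, Finset.card_univ, Fintype.card_fin, nsmul_eq_mul]
  have hSpsnn : 0 ≤ ∑ j, psiF rowsB ε x j := Finset.sum_nonneg fun j _ => hψnn j
  obtain ⟨a, ha, hax⟩ := minDot_attained (hAcomp i) (hAne i) (psiF rowsB ε x)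
  have h1 : minDot (rowsA i) (psiF rowsB ε x) ≤ RA * ∑ j, psiF rowsB ε x j := by
    rw [← hax]
    calc a ⬝ᵥ psiF rowsB ε x ≤ ∑ j, RA * psiF rowsB ε x j :=
          Finset.sum_le_sum fun j _ => mul_le_mul_of_nonneg_right
            ((le_abs_self _).trans (hRA i a ha j)) (hψnn j)
      _ = RA * ∑ j, psiF rowsB ε x j := by rw [Finset.mul_sum]
  simp only [TF]
  have h2 : ε * ∑ j, psiF rowsB ε x j ≤ 1 * ∑ j, psiF rowsB ε x j :=
    mul_le_mul_of_nonneg_right hε1' hSpsnn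
  have h3 : RA * ∑ j, psiF rowsB ε x j ≤ RA * (M * (RB + 1)) :=
    mul_le_mul_of_nonneg_left hSps RA0
  nlinarith [hSps, hSpsnn]

include hBne hBcomp hBnn in
lemma psi_strict_mono (hεpos : 0 < ε) {x u : Fin N → ℝ} (hxu : ∀ i, x i ≤ u i)
    (hssum : ∑ i, x i < ∑ i, u i) (j : Fin M) : psiF rowsB ε x j < psiF rowsB ε u j := by
  have h1 : maxDot (rowsB j) x ≤ maxDot (rowsB j) u :=
    maxDot_mono (hBcomp j) (hBne j) (hBnn j) hxu
  have h2 : ε * ∑ i, x i < ε * ∑ i, u i := by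
    exact mul_lt_mul_of_pos_left hssum hεpos
  simp only [psiF]; linarith

include hAne hAcomp hAnn hBne hBcomp hBnn in
lemma T_strict_mono [Nonempty (Fin M)] (hεpos : 0 < ε) {x u : Fin N → ℝ}
    (hxu : ∀ i, x i ≤ u i) (hssum : ∑ i, x i < ∑ i, u i) (i : Fin N) :
    TF rowsA rowsB ε x i < TF rowsA rowsB ε u i := by
  have hψ : ∀ j, psiF rowsB ε x j < psiF rowsB ε u j :=
    fun j => psi_strict_mono hBne hBcomp hBnn hεpos hxu hssum j
  have h1 : minDot (rowsA i) (psiF rowsB ε x) ≤ minDot (rowsA i) (psiF rowsB ε u) :=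
    minDot_mono (hAcomp i) (hAne i) (hAnn i) (fun j => (hψ j).le)
  have h2 : ∑ j, psiF rowsB ε x j < ∑ j, psiF rowsB ε u j :=
    Finset.sum_lt_sum_of_nonempty Finset.univ_nonempty fun j _ => hψ j
  have h3 : ε * ∑ j, psiF rowsB ε x j < ε * ∑ j, psiF rowsB ε u j :=
    mul_lt_mul_of_pos_left h2 hεpos
  simp only [TF]; linarith

include hBne hBcomp in
lemma psi_smul {c : ℝ} (hc : 0 < c) (x : Fin N → ℝ) (j : Fin M) :
    psiF rowsB ε (c • x) j = c * psiF rowsB ε x j := by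
  simp only [psiF]
  rw [maxDot_smul (hBcomp j) (hBne j) hc]
  have : ∑ i, (c • x) i = c * ∑ i, x i := by
    simp [Finset.mul_sum]
  rw [this]; ring

include hAne hAcomp hBne hBcomp in
lemma T_smul {c : ℝ} (hc : 0 < c) (x : Fin N → ℝ) (i : Fin N) :
    TF rowsA rowsB ε (c • x) i = c * TF rowsA rowsB ε x i := by
  simp only [TF]
  have hψ : psiF rowsB ε (c • x) = c • psiF rowsB ε x := by
    funext j
    exact psi_smul hBne hBcomp hc x j
  rw [hψ, minDot_smul (hAcomp i) (hAne i) hc]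
  have : ∑ j, (c • psiF rowsB ε x) j = c * ∑ j, psiF rowsB ε x j := by
    simp [Finset.mul_sum]
  rw [this]; ring

include hAne hAcomp hBne hBcomp hRA hRB in
lemma T_tendsto (xs : ℕ → (Fin N → ℝ)) (xi : Fin N → ℝ)
    (h : ∀ i, Tendsto (fun m => xs m i) atTop (𝓝 (xi i))) (i : Fin N) :
    Tendsto (fun m => TF rowsA rowsB ε (xs m) i) atTop (𝓝 (TF rowsA rowsB ε xi i)) := by
  have hψ : ∀ j, Tendsto (fun m => psiF rowsB ε (xs m) j) atTop (𝓝 (psiF rowsB ε xi j)) := by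
    intro j
    apply Tendsto.add
    · exact maxDot_tendsto (hBcomp j) (hBne j) (hRB j) xs xi h
    · exact (tendsto_finset_sum _ fun i' _ => h i').const_mul ε
  apply Tendsto.add
  · exact minDot_tendsto (hAcomp i) (hAne i) (hRA i) _ _ hψ
  · exact (tendsto_finset_sum _ fun j _ => hψ j).const_mul ε

lemma inv_succ_tendsto (φ : ℕ → ℕ) (hφ : StrictMono φ) :
    Tendsto (fun m => (1 : ℝ) / (φ m + 1)) atTop (𝓝 0) :=
  tendsto_one_div_add_atTop_nhds_zero_nat.comp hφ.tendsto_atTop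

include hAne hAcomp hAnn hBne hBcomp hBnn hRA hRB in
lemma exists_eigen [Nonempty (Fin N)] [Nonempty (Fin M)]
    (RA0 : 0 ≤ RA) (RB0 : 0 ≤ RB) (hεpos : 0 < ε) (hε1' : ε ≤ 1) :
    ∃ lam : ℝ, ∃ x : Fin N → ℝ, 0 < lam ∧ lam ≤ N * ((RA + 1) * (M * (RB + 1))) ∧
      (∀ i, 0 < x i) ∧ (∑ i, x i = 1) ∧
      (∀ i, TF rowsA rowsB ε x i = lam * x i) := by
  have hNpos : 0 < (N : ℝ) := by
    have := Fin.pos_iff_nonempty.mpr (inferInstance : Nonempty (Fin N))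
    exact_mod_cast this
  have hMpos : 0 < (M : ℝ) := by
    have := Fin.pos_iff_nonempty.mpr (inferInstance : Nonempty (Fin M))
    exact_mod_cast this
  set C : ℝ := (RA + 1) * (M * (RB + 1)) with hCdef
  have hCpos : 0 < C := by positivity
  set Δ : Set (Fin N → ℝ) := {x | (∀ i, 0 ≤ x i) ∧ ∑ i, x i = 1} with hΔdef
  have hxle1 : ∀ x ∈ Δ, ∀ i, x i ≤ 1 := by
    rintro x ⟨hx1, hx2⟩ i
    calc x i ≤ ∑ i', x i' := Finset.single_le_sum (fun i' _ => hx1 i') (Finset.mem_univ i)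
      _ = 1 := hx2
  have hDclosed : IsClosed Δ := by
    have : Δ = (⋂ i, {x : Fin N → ℝ | 0 ≤ x i}) ∩ {x : Fin N → ℝ | ∑ i, x i = 1} := by
      ext x
      simp [hΔdef, Set.mem_iInter]
    rw [this]
    exact IsClosed.inter
      (isClosed_iInter fun i => isClosed_le continuous_const (continuous_apply i))
      (isClosed_eq (continuous_finset_sum _ fun i _ => continuous_apply i) continuous_const)
  have hDcomp : IsCompact Δ := by
    apply (isCompact_Icc (a := fun _ : Fin N => (0:ℝ)) (b := fun _ => 1)).of_isClosed_subset
      hDclosed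
    rintro x hx
    constructor
    · intro i
      exact hx.1 i
    · intro i
      exact hxle1 x hx i
  set x0 : Fin N → ℝ := fun _ => (N : ℝ)⁻¹ with hx0def
  have hx0Δ : x0 ∈ Δ := by
    constructor
    · intro i
      have : (0:ℝ) < (N:ℝ)⁻¹ := by positivity
      simpa [hx0def] using this.le
    · simp [hx0def, Finset.sum_const, Finset.card_univ]
      field_simp
  set S : Set ℝ := {lam | 0 ≤ lam ∧ ∃ x ∈ Δ, ∀ i, lam * x i ≤ TF rowsA rowsB ε x i} with hSdef
  set lam0 : ℝ := ε * (M * ε) with hlam0def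
  have hlam0pos : 0 < lam0 := by positivity
  have hS0 : lam0 ∈ S := by
    refine ⟨hlam0pos.le, x0, hx0Δ, fun i => ?_⟩
    have h1 := T_ge hAne hAcomp hAnn hBne hBcomp hBnn hx0Δ.1 hx0Δ.2 hεpos i
    have h2 : x0 i ≤ 1 := hxle1 x0 hx0Δ i
    nlinarith
  have hSne : S.Nonempty := ⟨lam0, hS0⟩
  have hub : ∀ lam ∈ S, lam ≤ N * C := by
    rintro lam ⟨hlamnn, x, hxΔ, hineq⟩
    obtain ⟨i0, _, hi0⟩ := Finset.exists_max_image Finset.univ x Finset.univ_nonempty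
    have hxi0 : 1 ≤ (N : ℝ) * x i0 := by
      have : (1 : ℝ) = ∑ i, x i := hxΔ.2.symm
      have h2 : ∑ i, x i ≤ ∑ _i : Fin N, x i0 := by
        apply Finset.sum_le_sum
        intro i _
        exact hi0 i (Finset.mem_univ i)
      have h3 : ∑ _i : Fin N, x i0 = (N : ℝ) * x i0 := by
        rw [Finset.sum_const, Finset.card_univ, Fintype.card_fin, nsmul_eq_mul]
      linarith
    have hTle := T_le hAne hAcomp hAnn hBne hBcomp hBnn hRA hRB (RA0 := RA0) (RB0 := RB0)
      hxΔ.1 hxΔ.2 hεpos hε1' i0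
    calc lam = lam * 1 := (mul_one lam).symm
      _ ≤ lam * ((N : ℝ) * x i0) := mul_le_mul_of_nonneg_left hxi0 hlamnn
      _ = (N : ℝ) * (lam * x i0) := by ring
      _ ≤ (N : ℝ) * TF rowsA rowsB ε x i0 :=
          mul_le_mul_of_nonneg_left (hineq i0) hNpos.le
      _ ≤ N * C := mul_le_mul_of_nonneg_left hTle hNpos.le
  have hSbdd : BddAbove S := ⟨N * C, hub⟩
  set lamS : ℝ := sSup S with hlamSdef
  have hlamSpos : 0 < lamS := lt_of_lt_of_le hlam0pos (le_csSup hSbdd hS0)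
  have hlamSle : lamS ≤ N * C := csSup_le hSne hub
  -- get a witness for lamS by passing to the limit
  have hseq : ∀ m : ℕ, ∃ lam ∈ S, lamS - 1 / (m + 1) < lam := by
    intro m
    apply exists_lt_of_lt_csSup hSne
    have : (0:ℝ) < 1 / (m + 1) := by positivity
    linarith
  choose lamseq hmem hgt using hseq
  choose xseq hxseqΔ hxseqineq using fun m => (hmem m).2
  obtain ⟨xbar, hxbarΔ, φ, hφ, hconv⟩ := hDcomp.tendsto_subseq hxseqΔ
  have hconvi : ∀ i, Tendsto (fun m => xseq (φ m) i) atTop (𝓝 (xbar i)) := by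
    intro i
    exact (((continuous_apply i).tendsto xbar).comp hconv : _)
  have hlamconv : Tendsto (fun m => lamseq (φ m)) atTop (𝓝 lamS) := by
    apply tendsto_of_tendsto_of_tendsto_of_le_of_le
      (g := fun m => lamS - 1 / (φ m + 1)) (h := fun _ => lamS)
    · have := (inv_succ_tendsto φ hφ).const_sub lamS
      simpa using this
    · exact tendsto_const_nhds
    · intro m
      exact (hgt (φ m)).le
    · intro m
      exact le_csSup hSbdd (hmem (φ m))
  have hstar : ∀ i, lamS * xbar i ≤ TF rowsA rowsB ε xbar i := by
    intro i
    apply le_of_tendsto_of_tendsto' (hlamconv.mul (hconvi i))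
      (T_tendsto hAne hAcomp hBne hBcomp hRA hRB (fun m => xseq (φ m)) xbar hconvi i)
    intro m
    exact hxseqineq (φ m) i
  have hTpos : ∀ i, 0 < TF rowsA rowsB ε xbar i := by
    intro i
    have := T_ge hAne hAcomp hAnn hBne hBcomp hBnn hxbarΔ.1 hxbarΔ.2 hεpos i
    nlinarith
  -- show equality holds
  by_cases hall : ∀ i, TF rowsA rowsB ε xbar i = lamS * xbar i
  · refine ⟨lamS, xbar, hlamSpos, hlamSle, fun i => ?_, hxbarΔ.2, hall⟩
    have h1 := hTpos i
    rw [hall i] at h1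
    rcases mul_pos_iff.mp h1 with ⟨_, h⟩ | ⟨h, _⟩
    · exact h
    · linarith
  · exfalso
    push_neg at hall
    obtain ⟨i0, hi0ne⟩ := hall
    have hi0lt : lamS * xbar i0 < TF rowsA rowsB ε xbar i0 :=
      lt_of_le_of_ne (hstar i0) (Ne.symm hi0ne)
    set u : Fin N → ℝ := fun i => TF rowsA rowsB ε xbar i / lamS with hudef
    have hupos : ∀ i, 0 < u i := fun i => div_pos (hTpos i) hlamSpos
    have hxu : ∀ i, xbar i ≤ u i := by
      intro i
      rw [hudef]
      rw [le_div_iff₀ hlamSpos]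
      nlinarith [hstar i]
    have hxu0 : xbar i0 < u i0 := by
      rw [hudef, lt_div_iff₀ hlamSpos]
      nlinarith
    have hsumlt : ∑ i, xbar i < ∑ i, u i := by
      apply Finset.sum_lt_sum
      · intro i _
        exact hxu i
      · exact ⟨i0, Finset.mem_univ i0, hxu0⟩
    have hTu : ∀ i, TF rowsA rowsB ε xbar i < TF rowsA rowsB ε u i :=
      fun i => T_strict_mono hAne hAcomp hAnn hBne hBcomp hBnn hεpos hxu hsumlt i
    have hTeq : ∀ i, lamS * u i = TF rowsA rowsB ε xbar i := by
      intro i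
      rw [hudef]
      field_simp
    set lam' : ℝ := Finset.univ.inf' Finset.univ_nonempty
      (fun i => TF rowsA rowsB ε u i / u i) with hlam'def
    have hlam'gt : lamS < lam' := by
      rw [hlam'def, Finset.lt_inf'_iff]
      intro i _
      rw [lt_div_iff₀ (hupos i)]
      calc lamS * u i = TF rowsA rowsB ε xbar i := hTeq i
        _ < TF rowsA rowsB ε u i := hTu i
    have hlam'ineq : ∀ i, lam' * u i ≤ TF rowsA rowsB ε u i := by
      intro i
      have h1 : lam' ≤ TF rowsA rowsB ε u i / u i :=
        Finset.inf'_le _ (Finset.mem_univ i)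
      rw [le_div_iff₀ (hupos i)] at h1
      linarith [h1]
    set s : ℝ := ∑ i, u i with hsdef
    have hspos : 0 < s := by
      have : (1:ℝ) = ∑ i, xbar i := hxbarΔ.2.symm
      linarith
    have hlam'S : lam' ∈ S := by
      refine ⟨by linarith, s⁻¹ • u, ⟨fun i => ?_, ?_⟩, fun i => ?_⟩
      · have := (hupos i).le
        have h2 : 0 ≤ s⁻¹ := inv_nonneg.mpr hspos.le
        simp only [Pi.smul_apply, smul_eq_mul]
        positivity
      · simp only [Pi.smul_apply, smul_eq_mul, ← Finset.mul_sum]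
        field_simp
        rfl
      · rw [T_smul hAne hAcomp hBne hBcomp (inv_pos.mpr hspos) u i]
        simp only [Pi.smul_apply, smul_eq_mul]
        calc lam' * (s⁻¹ * u i) = s⁻¹ * (lam' * u i) := by ring
          _ ≤ s⁻¹ * TF rowsA rowsB ε u i :=
              mul_le_mul_of_nonneg_left (hlam'ineq i) (inv_nonneg.mpr hspos.le)
    have := le_csSup hSbdd hlam'S
    linarith

include hAne hAcomp hAnn hBne hBcomp hBnn hRA hRB in
lemma saddle [Nonempty (Fin N)] [Nonempty (Fin M)]
    (RA0 : 0 ≤ RA) (RB0 : 0 ≤ RB) (hεpos : 0 < ε) (hε1' : ε ≤ 1) :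
    ∃ lam : ℝ, ∃ Bs : Matrix (Fin M) (Fin N) ℝ,
      0 < lam ∧ lam ≤ N * ((RA + 1) * (M * (RB + 1))) ∧ Bs ∈ IRU rowsB ∧
      (∃ As ∈ IRU rowsA, ∀ B ∈ IRU rowsB, specRad (As * B) ≤ lam) ∧
      (∀ A ∈ IRU rowsA,
        lam ≤ specRad ((A + Matrix.of fun _ _ => ε) * (Bs + Matrix.of fun _ _ => ε))) := by
  obtain ⟨lam, x, hlampos, hlamle, hxpos, hxsum, heig⟩ :=
    exists_eigen hAne hAcomp hAnn hBne hBcomp hBnn hRA hRB RA0 RB0 hεpos hε1'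
  set ψ : Fin M → ℝ := psiF rowsB ε x with hψdef
  have hxnn : ∀ i, 0 ≤ x i := fun i => (hxpos i).le
  have hψnn : ∀ j, 0 ≤ ψ j := fun j => psi_nonneg hBne hBcomp hBnn hxnn j hεpos.le
  have hSψnn : 0 ≤ ∑ j, ψ j := Finset.sum_nonneg fun j _ => hψnn j
  -- optimal A
  choose aa haamem haaeq using fun i => minDot_attained (hAcomp i) (hAne i) ψ
  set As : Matrix (Fin N) (Fin M) ℝ := Matrix.of aa with hAsdef
  have hAsmem : As ∈ IRU rowsA := fun i => haamem i
  -- optimal B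
  choose bb hbbmem hbbeq using fun j => maxDot_attained (hBcomp j) (hBne j) x
  set Bs : Matrix (Fin M) (Fin N) ℝ := Matrix.of bb with hBsdef
  have hBsmem : Bs ∈ IRU rowsB := fun j => hbbmem j
  refine ⟨lam, Bs, hlampos, hlamle, hBsmem, ⟨As, hAsmem, fun B hB => ?_⟩, fun A hA => ?_⟩
  · -- upper bound for As * B
    apply specRad_le_CW (A := As * B) ?_ hxpos hlampos.le
    · intro i
      rw [← Matrix.mulVec_mulVec]
      have hBx : ∀ j, B.mulVec x j ≤ ψ j := by
        intro j
        have h1 : B j ⬝ᵥ x ≤ maxDot (rowsB j) x := le_maxDot (hBcomp j) (hB j) x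
        have h2 : 0 ≤ ε * ∑ i', x i' := by
          rw [hxsum]; linarith
        exact le_trans h1 (by simp only [hψdef, psiF]; linarith)
      calc As.mulVec (B.mulVec x) i = aa i ⬝ᵥ B.mulVec x := rfl
        _ ≤ aa i ⬝ᵥ ψ := Finset.sum_le_sum fun j _ =>
            mul_le_mul_of_nonneg_left (hBx j) (hAnn i (aa i) (haamem i) j)
        _ = minDot (rowsA i) ψ := haaeq i
        _ ≤ TF rowsA rowsB ε x i := by
            simp only [TF]
            have : 0 ≤ ε * ∑ j, ψ j := mul_nonneg hεpos.le hSψnn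
            linarith
        _ = lam * x i := heig i
    · intro i k
      rw [Matrix.mul_apply]
      apply Finset.sum_nonneg
      intro j _
      exact mul_nonneg (hAnn i (aa i) (haamem i) j) (hBnn j (B j) (hB j) k)
  · -- lower bound for (A + ε) * (Bs + ε)
    have hx0 : x ≠ 0 := by
      intro h0
      have := hxpos (Classical.arbitrary (Fin N))
      rw [h0] at this
      simp at this
    apply CW_le_specRad (A := _) ?_ hxnn hx0 hlampos.le
    · intro i
      rw [← Matrix.mulVec_mulVec]
      have hinner : (Bs + Matrix.of fun _ _ => ε).mulVec x = ψ := by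
        funext j
        rw [Matrix.add_mulVec]
        have h1 : (Matrix.of fun _ _ => ε : Matrix (Fin M) (Fin N) ℝ).mulVec x j
            = ε * ∑ i', x i' := by
          simp [Matrix.mulVec, dotProduct, Finset.mul_sum]
        have h2 : Bs.mulVec x j = maxDot (rowsB j) x := hbbeq j
        simp only [Pi.add_apply, h2]
        rw [h1]
        rfl
      rw [hinner, Matrix.add_mulVec]
      have houter : (Matrix.of fun _ _ => ε : Matrix (Fin N) (Fin M) ℝ).mulVec ψ i
          = ε * ∑ j, ψ j := by
        simp [Matrix.mulVec, dotProduct, Finset.mul_sum]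
      simp only [Pi.add_apply, houter]
      have h3 : minDot (rowsA i) ψ ≤ A.mulVec ψ i := minDot_le (hAcomp i) (hA i) ψ
      calc lam * x i = TF rowsA rowsB ε x i := (heig i).symm
        _ = minDot (rowsA i) ψ + ε * ∑ j, ψ j := rfl
        _ ≤ A.mulVec ψ i + ε * ∑ j, ψ j := by linarith
    · intro i k
      rw [Matrix.mul_apply]
      apply Finset.sum_nonneg
      intro j _
      have h1 : 0 ≤ A i j + ε := by
        have := hAnn i (A i) (hA i) j
        linarith
      have h2 : 0 ≤ Bs j k + ε := by
        have := hBnn j (bb j) (hbbmem j) k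
        have hb : Bs j k = bb j k := rfl
        rw [hb]
        linarith
      simpa using mul_nonneg h1 h2

end Game


lemma specRad_dim_zero {n : ℕ} (hn : n = 0) (A : Matrix (Fin n) (Fin n) ℝ) : specRad A = 0 := by
  subst hn
  haveI : Subsingleton (Matrix (Fin 0) (Fin 0) ℂ) :=
    ⟨fun a b => by ext i j; exact i.elim0⟩
  have hsp : spectrum ℂ (A.map Complex.ofReal) = ∅ := by
    ext z
    simp [spectrum.mem_iff, isUnit_of_subsingleton]
  rw [specRad, hsp]
  simp [Real.sSup_empty]

lemma specRad_zero_matrix {n : ℕ} : specRad (0 : Matrix (Fin n) (Fin n) ℝ) = 0 := by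
  rcases Nat.eq_zero_or_pos n with h | h
  · exact specRad_dim_zero h 0
  · haveI : Nonempty (Fin n) := ⟨⟨0, h⟩⟩
    haveI : Nontrivial (Matrix (Fin n) (Fin n) ℂ) := by
      refine ⟨0, 1, fun heq => ?_⟩
      have := congrFun (congrFun heq ⟨0, h⟩) ⟨0, h⟩
      simp [Matrix.one_apply] at this
    have hm : (0 : Matrix (Fin n) (Fin n) ℝ).map Complex.ofReal = 0 := by
      ext i j; simp
    rw [specRad, hm, spectrum.zero_eq, Set.image_singleton]
    simp

lemma minimax_zero_case {N M : ℕ} {rowsA : Fin N → Set (Fin M → ℝ)}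
    {rowsB : Fin M → Set (Fin N → ℝ)}
    (hAne : (IRU rowsA).Nonempty) (hBne : (IRU rowsB).Nonempty)
    (h0 : ∀ A ∈ IRU rowsA, ∀ B ∈ IRU rowsB, specRad (A * B) = 0) :
    sInf ((fun A => sSup ((fun B => specRad (A * B)) '' IRU rowsB)) '' IRU rowsA) =
      sSup ((fun B => sInf ((fun A => specRad (A * B)) '' IRU rowsA)) '' IRU rowsB) := by
  have himg1 : (fun A => sSup ((fun B => specRad (A * B)) '' IRU rowsB)) '' IRU rowsA = {0} := by
    apply Set.eq_singleton_iff_nonempty_unique_mem.mpr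
    constructor
    · exact hAne.image _
    · rintro r ⟨A, hA, rfl⟩
      have : (fun B => specRad (A * B)) '' IRU rowsB = {0} := by
        apply Set.eq_singleton_iff_nonempty_unique_mem.mpr
        exact ⟨hBne.image _, by rintro r' ⟨B, hB, rfl⟩; exact h0 A hA B hB⟩
      show sSup ((fun B => specRad (A * B)) '' IRU rowsB) = 0
      rw [this, csSup_singleton]
  have himg2 : (fun B => sInf ((fun A => specRad (A * B)) '' IRU rowsA)) '' IRU rowsB = {0} := by
    apply Set.eq_singleton_iff_nonempty_unique_mem.mpr
    constructor
    · exact hBne.image _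
    · rintro r ⟨B, hB, rfl⟩
      have : (fun A => specRad (A * B)) '' IRU rowsA = {0} := by
        apply Set.eq_singleton_iff_nonempty_unique_mem.mpr
        exact ⟨hAne.image _, by rintro r' ⟨A, hA, rfl⟩; exact h0 A hA B hB⟩
      show sInf ((fun A => specRad (A * B)) '' IRU rowsA) = 0
      rw [this, csInf_singleton]
  rw [himg1, himg2, csInf_singleton, csSup_singleton]

theorem stmt9 {N M : ℕ}
    (rowsA : Fin N → Set (Fin M → ℝ)) (rowsB : Fin M → Set (Fin N → ℝ))
    (hAne : ∀ i, (rowsA i).Nonempty) (hAcomp : ∀ i, IsCompact (rowsA i))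
    (hAnn : ∀ i, ∀ a ∈ rowsA i, ∀ j, 0 ≤ a j)
    (hBne : ∀ i, (rowsB i).Nonempty) (hBcomp : ∀ i, IsCompact (rowsB i))
    (hBnn : ∀ i, ∀ b ∈ rowsB i, ∀ j, 0 ≤ b j) :
    sInf ((fun A => sSup ((fun B => specRad (A * B)) '' IRU rowsB)) '' IRU rowsA) =
      sSup ((fun B => sInf ((fun A => specRad (A * B)) '' IRU rowsA)) '' IRU rowsB) := by
  classical
  have hAsetne : (IRU rowsA).Nonempty := IRU_nonempty hAne
  have hBsetne : (IRU rowsB).Nonempty := IRU_nonempty hBne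
  rcases Nat.eq_zero_or_pos N with hN | hN
  · exact minimax_zero_case hAsetne hBsetne fun A _ B _ => specRad_dim_zero hN _
  rcases Nat.eq_zero_or_pos M with hM | hM
  · refine minimax_zero_case hAsetne hBsetne fun A _ B _ => ?_
    have hAB : A * B = 0 := by
      subst hM
      ext i k
      rw [Matrix.mul_apply]
      exact Finset.sum_of_isEmpty _
    rw [hAB]
    exact specRad_zero_matrix
  haveI : Nonempty (Fin N) := ⟨⟨0, hN⟩⟩
  haveI : Nonempty (Fin M) := ⟨⟨0, hM⟩⟩
  obtain ⟨RA, RA0, hRA⟩ := rows_bound rowsA hAcomp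
  obtain ⟨RB, RB0, hRB⟩ := rows_bound rowsB hBcomp
  set Crho : ℝ := N * (M * (RA * RB)) with hCrhodef
  have hCrho0 : 0 ≤ Crho := by positivity
  -- uniform bound on spectral radii
  have hCb : ∀ A ∈ IRU rowsA, ∀ B ∈ IRU rowsB, specRad (A * B) ≤ Crho := by
    intro A hA B hB
    have hABnn : ∀ i k, 0 ≤ (A * B) i k := by
      intro i k
      rw [Matrix.mul_apply]
      exact Finset.sum_nonneg fun j _ =>
        mul_nonneg (hAnn i (A i) (hA i) j) (hBnn j (B j) (hB j) k)
    apply specRad_le_CW hABnn (x := fun _ => (1:ℝ)) (fun _ => one_pos) hCrho0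
    intro i
    have hent : ∀ k, (A * B) i k ≤ M * (RA * RB) := by
      intro k
      rw [Matrix.mul_apply]
      calc ∑ j, A i j * B j k ≤ ∑ _j : Fin M, RA * RB := by
            apply Finset.sum_le_sum
            intro j _
            apply mul_le_mul ((le_abs_self _).trans (hRA i (A i) (hA i) j))
              ((le_abs_self _).trans (hRB j (B j) (hB j) k))
              (hBnn j (B j) (hB j) k) RA0
        _ = M * (RA * RB) := by
            rw [Finset.sum_const, Finset.card_univ, Fintype.card_fin, nsmul_eq_mul]
    calc (A * B).mulVec (fun _ => (1:ℝ)) i = ∑ k, (A * B) i k * 1 := rfl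
      _ ≤ ∑ _k : Fin N, M * (RA * RB) * 1 := by
          apply Finset.sum_le_sum
          intro k _
          simpa using hent k
      _ = Crho * 1 := by
          rw [Finset.sum_const, Finset.card_univ, Fintype.card_fin, nsmul_eq_mul, hCrhodef]
          ring
  have hrnn : ∀ (A : Matrix (Fin N) (Fin M) ℝ) (B : Matrix (Fin M) (Fin N) ℝ),
      0 ≤ specRad (A * B) := fun A B => specRad_nonneg _
  -- inner-set boundedness facts
  have hFbddBelow : BddBelow ((fun A => sSup ((fun B => specRad (A * B)) '' IRU rowsB)) ''
      IRU rowsA) := by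
    refine ⟨0, ?_⟩
    rintro r ⟨A, hA, rfl⟩
    exact Real.sSup_nonneg (by rintro r' ⟨B, hB, rfl⟩; exact hrnn A B)
  have hGB : ∀ A ∈ IRU rowsA, ∀ B ∈ IRU rowsB,
      sInf ((fun A' => specRad (A' * B)) '' IRU rowsA) ≤
        sSup ((fun B' => specRad (A * B')) '' IRU rowsB) := by
    intro A hA B hB
    calc sInf ((fun A' => specRad (A' * B)) '' IRU rowsA) ≤ specRad (A * B) :=
          csInf_le ⟨0, by rintro r ⟨A', hA', rfl⟩; exact hrnn A' B⟩ ⟨A, hA, rfl⟩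
      _ ≤ sSup ((fun B' => specRad (A * B')) '' IRU rowsB) :=
          le_csSup ⟨Crho, by rintro r ⟨B', hB', rfl⟩; exact hCb A hA B' hB'⟩ ⟨B, hB, rfl⟩
  -- weak duality
  have hweak : sSup ((fun B => sInf ((fun A => specRad (A * B)) '' IRU rowsA)) '' IRU rowsB) ≤
      sInf ((fun A => sSup ((fun B => specRad (A * B)) '' IRU rowsB)) '' IRU rowsA) := by
    apply le_csInf (hAsetne.image _)
    rintro fa ⟨A, hA, rfl⟩
    apply csSup_le (hBsetne.image _)
    rintro gb ⟨B, hB, rfl⟩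
    exact hGB A hA B hB
  -- the approximate saddle points
  have hsad : ∀ m : ℕ, ∃ lam : ℝ, ∃ Bs : Matrix (Fin M) (Fin N) ℝ,
      0 < lam ∧ lam ≤ N * ((RA + 1) * (M * (RB + 1))) ∧ Bs ∈ IRU rowsB ∧
      (∃ As ∈ IRU rowsA, ∀ B ∈ IRU rowsB, specRad (As * B) ≤ lam) ∧
      (∀ A ∈ IRU rowsA,
        lam ≤ specRad ((A + Matrix.of fun _ _ => 1/(m+1 : ℝ)) *
          (Bs + Matrix.of fun _ _ => 1/(m+1 : ℝ)))) := by
    intro m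
    apply saddle hAne hAcomp hAnn hBne hBcomp hBnn hRA hRB RA0 RB0
    · positivity
    · rw [div_le_one (by positivity)]
      linarith [Nat.cast_nonneg (α := ℝ) m]
  choose lamseq Bseq hl1 hl2 hl3 hl4 hl5 using hsad
  -- LHS ≤ lamseq m for every m
  have hLHSle : ∀ m, sInf ((fun A => sSup ((fun B => specRad (A * B)) '' IRU rowsB)) ''
      IRU rowsA) ≤ lamseq m := by
    intro m
    obtain ⟨As, hAs, hub⟩ := hl4 m
    have hFle : sSup ((fun B => specRad (As * B)) '' IRU rowsB) ≤ lamseq m :=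
      Real.sSup_le (by rintro r ⟨B, hB, rfl⟩; exact hub B hB) (hl1 m).le
    exact (csInf_le hFbddBelow ⟨As, hAs, rfl⟩).trans hFle
  -- extract convergent subsequences
  haveI : FirstCountableTopology (Matrix (Fin M) (Fin N) ℝ) :=
    inferInstanceAs (FirstCountableTopology ((Fin M) → (Fin N) → ℝ))
  obtain ⟨Bh, hBh, φ, hφ, hBconv⟩ := (IRU_compact hBcomp).tendsto_subseq hl3
  obtain ⟨lh, _, φ2, hφ2, hlconv⟩ :=
    (isCompact_Icc (a := (0:ℝ)) (b := N * ((RA + 1) * (M * (RB + 1))))).tendsto_subseq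
      (x := fun m => lamseq (φ m)) (fun m => ⟨(hl1 _).le, hl2 _⟩)
  set σ : ℕ → ℕ := φ ∘ φ2 with hσdef
  have hσmono : StrictMono σ := hφ.comp hφ2
  have hBconv2 : Tendsto (fun m => Bseq (σ m)) atTop (𝓝 Bh) := by
    have := hBconv.comp hφ2.tendsto_atTop
    exact this
  have hBentry : ∀ j k, Tendsto (fun m => Bseq (σ m) j k) atTop (𝓝 (Bh j k)) := by
    intro j k
    exact (((continuous_apply k).comp (continuous_apply j)).tendsto Bh).comp hBconv2
  have hlconv2 : Tendsto (fun m => lamseq (σ m)) atTop (𝓝 lh) := hlconv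
  have hεconv : Tendsto (fun m => 1/(σ m + 1 : ℝ)) atTop (𝓝 0) := inv_succ_tendsto σ hσmono
  -- LHS ≤ lh
  have hLHSlh : sInf ((fun A => sSup ((fun B => specRad (A * B)) '' IRU rowsB)) ''
      IRU rowsA) ≤ lh :=
    ge_of_tendsto' hlconv2 (fun m => hLHSle (σ m)) |>.trans_eq rfl
  -- lh ≤ specRad (A * Bh) for all A, by upper semicontinuity
  have husc : ∀ A ∈ IRU rowsA, lh ≤ specRad (A * Bh) := by
    intro A hA
    apply specRad_usc (fun m => (A + Matrix.of fun _ _ => 1/(σ m + 1 : ℝ)) *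
        (Bseq (σ m) + Matrix.of fun _ _ => 1/(σ m + 1 : ℝ))) (A * Bh) ?_
      (fun m => lamseq (σ m)) lh hlconv2 (fun m => hl5 (σ m) A hA)
    intro i k
    rw [Matrix.mul_apply]
    have : ∀ j, Tendsto (fun m => (A i j + 1/(σ m + 1 : ℝ)) *
        (Bseq (σ m) j k + 1/(σ m + 1 : ℝ))) atTop (𝓝 (A i j * Bh j k)) := by
      intro j
      have h1 := (tendsto_const_nhds (x := A i j) (f := atTop (α := ℕ))).add hεconv
      have h2 := (hBentry j k).add hεconv
      have := h1.mul h2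
      simpa using this
    have := tendsto_finset_sum Finset.univ (fun j _ => this j)
    convert this using 2 <;> simp [Matrix.mul_apply, Matrix.add_apply]
  -- conclude
  apply le_antisymm _ hweak
  have hGBh : lh ≤ sInf ((fun A => specRad (A * Bh)) '' IRU rowsA) := by
    apply le_csInf (hAsetne.image _)
    rintro r ⟨A, hA, rfl⟩
    exact husc A hA
  obtain ⟨A0, hA0⟩ := hAsetne
  have hRHSge : sInf ((fun A => specRad (A * Bh)) '' IRU rowsA) ≤
      sSup ((fun B => sInf ((fun A => specRad (A * B)) '' IRU rowsA)) '' IRU rowsB) := by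
    apply le_csSup
    · refine ⟨sSup ((fun B' => specRad (A0 * B')) '' IRU rowsB), ?_⟩
      rintro r ⟨B, hB, rfl⟩
      exact hGB A0 hA0 B hB
    · exact ⟨Bh, hBh, rfl⟩
  linarith [hLHSlh, hGBh, hRHSge]
end

section
/- If 𝒜 is a compact IRU-set of strictly positive square matrices, Ã ∈ 𝒜 attains the minimum spectral radius over 𝒜, and ṽ > 0 is the Perron eigenvector of Ã for the eigenvalue ρ(Ã), then A·ṽ ≥ ρ(Ã)·ṽ componentwise for every A ∈ 𝒜. -/
open Matrix

lemma mem_spectrum_iff_exists_eigvec {N : ℕ} (M : Matrix (Fin N) (Fin N) ℂ) (μ : ℂ) :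
    μ ∈ spectrum ℂ M ↔ ∃ x : Fin N → ℂ, x ≠ 0 ∧ M.mulVec x = μ • x := by
  rw [spectrum.mem_iff, Matrix.isUnit_iff_isUnit_det, isUnit_iff_ne_zero, not_ne_iff,
    ← Matrix.exists_mulVec_eq_zero_iff]
  constructor
  · rintro ⟨x, hx, hx0⟩
    refine ⟨x, hx, ?_⟩
    have halg : ((algebraMap ℂ (Matrix (Fin N) (Fin N) ℂ)) μ).mulVec x = μ • x := by
      funext k
      simp [Matrix.mulVec, dotProduct, Matrix.algebraMap_matrix_apply, ite_mul,
        Finset.sum_ite_eq]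
    have := congrArg (fun w => M.mulVec x + w) hx0
    simp only [Matrix.sub_mulVec, add_sub_cancel, add_zero] at this
    rw [← this]; exact halg
  · rintro ⟨x, hx, hx0⟩
    refine ⟨x, hx, ?_⟩
    have halg : ((algebraMap ℂ (Matrix (Fin N) (Fin N) ℂ)) μ).mulVec x = μ • x := by
      funext k
      simp [Matrix.mulVec, dotProduct, Matrix.algebraMap_matrix_apply, ite_mul,
        Finset.sum_ite_eq]
    rw [Matrix.sub_mulVec, hx0, halg, sub_self]

lemma spectrum_nonempty_of_pos {N : ℕ} (hN : 0 < N) (M : Matrix (Fin N) (Fin N) ℂ) :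
    (spectrum ℂ M).Nonempty := by
  haveI : NeZero N := ⟨hN.ne'⟩
  haveI : Nontrivial (Fin N → ℂ) := ⟨0, fun _ => 1, by
    intro h; exact one_ne_zero (congrFun h.symm ⟨0, hN⟩)⟩
  obtain ⟨μ, hμ⟩ := Module.End.exists_eigenvalue (Matrix.mulVecLin M)
  obtain ⟨x, hx⟩ := hμ.exists_hasEigenvector
  exact ⟨μ, (mem_spectrum_iff_exists_eigvec M μ).2 ⟨x, hx.right, hx.apply_eq_smul⟩⟩

lemma eig_bound {N : ℕ} (M : Matrix (Fin N) (Fin N) ℝ) (hM : ∀ i j, 0 ≤ M i j)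
    (v : Fin N → ℝ) (hv : ∀ i, 0 < v i) (c : ℝ)
    (hbound : ∀ k, M.mulVec v k ≤ c * v k)
    (μ : ℂ) (x : Fin N → ℂ) (hx : x ≠ 0)
    (heig : (M.map Complex.ofReal).mulVec x = μ • x) :
    ‖μ‖ ≤ c := by
  have hNe : (Finset.univ : Finset (Fin N)).Nonempty := by
    rcases Function.ne_iff.1 hx with ⟨j, -⟩
    exact ⟨j, Finset.mem_univ j⟩
  obtain ⟨i, -, hi⟩ := Finset.exists_max_image Finset.univ
    (fun j => ‖x j‖ / v j) hNe
  set t := ‖x i‖ / v i with ht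
  have hub : ∀ j, ‖x j‖ ≤ t * v j := by
    intro j
    have := hi j (Finset.mem_univ j)
    calc ‖x j‖ = ‖x j‖ / v j * v j := by
          rw [div_mul_cancel₀ _ (hv j).ne']
      _ ≤ t * v j := by
          apply mul_le_mul_of_nonneg_right this (hv j).le
  have ht0 : 0 < t := by
    rcases Function.ne_iff.1 hx with ⟨j, hj⟩
    have h1 : 0 < ‖x j‖ / v j :=
      div_pos (by simpa using hj) (hv j)
    exact lt_of_lt_of_le h1 (hi j (Finset.mem_univ j))
  have hxi : ‖x i‖ = t * v i := by
    rw [ht, div_mul_cancel₀ _ (hv i).ne']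
  have key : ‖μ‖ * (t * v i) ≤ c * (t * v i) := by
    rw [← hxi, ← norm_mul]
    have h1 : μ * x i = ((M.map Complex.ofReal).mulVec x) i := by rw [heig]; simp
    rw [h1]
    have h2 : ((M.map Complex.ofReal).mulVec x) i = ∑ j, (M i j : ℂ) * x j := by
      simp [Matrix.mulVec, dotProduct, Matrix.map_apply]
    rw [h2]
    calc ‖∑ j, (M i j : ℂ) * x j‖ ≤ ∑ j, ‖(M i j : ℂ) * x j‖ :=
          norm_sum_le _ _
      _ = ∑ j, M i j * ‖x j‖ := by
          refine Finset.sum_congr rfl fun j _ => ?_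
          rw [norm_mul, Complex.norm_real, Real.norm_eq_abs, abs_of_nonneg (hM i j)]
      _ ≤ ∑ j, M i j * (t * v j) := by
          refine Finset.sum_le_sum fun j _ => ?_
          exact mul_le_mul_of_nonneg_left (hub j) (hM i j)
      _ = t * (M.mulVec v i) := by
          simp only [Matrix.mulVec, dotProduct, Finset.mul_sum]
          exact Finset.sum_congr rfl fun j _ => by ring
      _ ≤ t * (c * v i) := mul_le_mul_of_nonneg_left (hbound i) ht0.le
      _ = c * (t * v i) := by ring
      _ = c * ‖x i‖ := by rw [hxi]
  have hpos : 0 < t * v i := mul_pos ht0 (hv i)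
  exact le_of_mul_le_mul_right (by linarith) hpos

theorem stmt12 {N : ℕ} (rows : Fin N → Set (Fin N → ℝ))
    (hne : ∀ i, (rows i).Nonempty) (hcomp : ∀ i, IsCompact (rows i))
    (hpos : ∀ i, ∀ a ∈ rows i, ∀ j, 0 < a j)
    (Atil : Matrix (Fin N) (Fin N) ℝ) (hAtil : Atil ∈ IRU rows)
    (hmin : ∀ A ∈ IRU rows, specRad Atil ≤ specRad A)
    (vtil : Fin N → ℝ) (hvpos : ∀ i, 0 < vtil i)
    (hev : Atil.mulVec vtil = specRad Atil • vtil) :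
    ∀ A ∈ IRU rows, ∀ i, specRad Atil * vtil i ≤ A.mulVec vtil i := by
  intro A hA i
  by_contra hcon
  push_neg at hcon
  set ρ := specRad Atil with hρ
  have hN : 0 < N := i.pos
  -- ρ > 0
  have hApos : ∀ k j, 0 < Atil k j := fun k j => hpos k (Atil k) (hAtil k) j
  have hρv : ∀ k, Atil.mulVec vtil k = ρ * vtil k := by
    intro k; rw [hev]; simp
  have hρpos : 0 < ρ := by
    have h1 : 0 < Atil.mulVec vtil i := by
      simp only [Matrix.mulVec, dotProduct]
      exact Finset.sum_pos (fun j _ => mul_pos (hApos i j) (hvpos j)) ⟨i, Finset.mem_univ i⟩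
    rw [hρv i] at h1
    nlinarith [hvpos i]
  -- the perturbed matrix B
  set B : Matrix (Fin N) (Fin N) ℝ := Function.update Atil i (A i) with hBdef
  have hBrow : ∀ k, B k = if k = i then A i else Atil k := by
    intro k; rw [hBdef]; exact Function.update_apply Atil i (A i) k
  have hB : B ∈ IRU rows := by
    intro k
    rw [hBrow k]
    split
    · next h => rw [h]; exact hA i
    · exact hAtil k
  have hBpos : ∀ k j, 0 < B k j := fun k j => hpos k (B k) (hB k) j
  have hBv_le : ∀ k, B.mulVec vtil k ≤ ρ * vtil k := by
    intro k
    show B k ⬝ᵥ vtil ≤ ρ * vtil k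
    rw [hBrow k]
    split
    · next h => subst h; exact hcon.le
    · exact (hρv k).le
  have hBv_i : B.mulVec vtil i < ρ * vtil i := by
    show B i ⬝ᵥ vtil < ρ * vtil i
    rw [hBrow i, if_pos rfl]
    exact hcon
  -- strict inequality for B^2
  have hB2 : ∀ k, (B * B).mulVec vtil k < ρ ^ 2 * vtil k := by
    intro k
    rw [← Matrix.mulVec_mulVec]
    have h1 : B.mulVec (B.mulVec vtil) k = ∑ j, B k j * (B.mulVec vtil j) := by
      simp [Matrix.mulVec, dotProduct]
    rw [h1]
    calc ∑ j, B k j * (B.mulVec vtil j) < ∑ j, B k j * (ρ * vtil j) := by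
          refine Finset.sum_lt_sum (fun j _ => mul_le_mul_of_nonneg_left (hBv_le j) (hBpos k j).le)
            ⟨i, Finset.mem_univ i, ?_⟩
          exact mul_lt_mul_of_pos_left hBv_i (hBpos k i)
      _ = ρ * (B.mulVec vtil k) := by
          simp only [Matrix.mulVec, dotProduct, Finset.mul_sum]
          exact Finset.sum_congr rfl fun j _ => by ring
      _ ≤ ρ * (ρ * vtil k) := mul_le_mul_of_nonneg_left (hBv_le k) hρpos.le
      _ = ρ ^ 2 * vtil k := by ring
  -- the sup of ratios
  have huniv : (Finset.univ : Finset (Fin N)).Nonempty := ⟨i, Finset.mem_univ i⟩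
  set c : ℝ := Finset.univ.sup' huniv (fun k => (B * B).mulVec vtil k / vtil k) with hc
  have hclt : c < ρ ^ 2 := by
    rw [hc, Finset.sup'_lt_iff]
    intro k _
    rw [div_lt_iff₀ (hvpos k)]
    exact hB2 k
  have hcbound : ∀ k, (B * B).mulVec vtil k ≤ c * vtil k := by
    intro k
    rw [← div_le_iff₀ (hvpos k)]
    exact Finset.le_sup' (fun k => (B * B).mulVec vtil k / vtil k) (Finset.mem_univ k)
  have hc0 : 0 ≤ c := by
    refine le_trans ?_ (Finset.le_sup' (fun k => (B * B).mulVec vtil k / vtil k)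
      (Finset.mem_univ i))
    apply div_nonneg _ (hvpos i).le
    rw [← Matrix.mulVec_mulVec]
    simp only [Matrix.mulVec, dotProduct]
    apply Finset.sum_nonneg
    intro j _
    apply mul_nonneg (hBpos i j).le
    exact Finset.sum_nonneg fun l _ => (mul_nonneg (hBpos j l).le (hvpos l).le)
  -- bound the spectral radius of B
  have hspec : specRad B ≤ Real.sqrt c := by
    apply csSup_le
    · obtain ⟨μ, hμ⟩ := spectrum_nonempty_of_pos hN (B.map Complex.ofReal)
      exact ⟨‖μ‖, μ, hμ, rfl⟩
    · rintro r ⟨μ, hμ, rfl⟩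
      obtain ⟨x, hx, hx0⟩ := (mem_spectrum_iff_exists_eigvec _ μ).1 hμ
      have heig2 : ((B * B).map Complex.ofReal).mulVec x = (μ ^ 2) • x := by
        have hmap : (B * B).map Complex.ofReal =
            (B.map Complex.ofReal) * (B.map Complex.ofReal) := by
          ext k l
          simp [Matrix.mul_apply, Matrix.map_apply]
        rw [hmap, ← Matrix.mulVec_mulVec, hx0, Matrix.mulVec_smul, hx0, smul_smul, pow_two]
      have hB2nn : ∀ k j, 0 ≤ (B * B) k j := by
        intro k j
        rw [Matrix.mul_apply]
        exact Finset.sum_nonneg fun l _ => mul_nonneg (hBpos k l).le (hBpos l j).le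
      have := eig_bound (B * B) hB2nn vtil hvpos c hcbound (μ ^ 2) x hx heig2
      rw [norm_pow] at this
      have h1 : ‖μ‖ = Real.sqrt (‖μ‖ ^ 2) := by
        rw [Real.sqrt_sq (norm_nonneg μ)]
      show ‖μ‖ ≤ _
      rw [h1]
      exact Real.sqrt_le_sqrt this
  have hsqrt : Real.sqrt c < ρ := (Real.sqrt_lt' hρpos).2 hclt
  have := hmin B hB
  linarith
end

section
/- If 𝒜 is a compact IRU-set of strictly positive square matrices, Ã ∈ 𝒜 attains the maximum spectral radius over 𝒜, and ṽ > 0 is the Perron eigenvector of Ã for the eigenvalue ρ(Ã), then A·ṽ ≤ ρ(Ã)·ṽ componentwise for every A ∈ 𝒜. -/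
open Matrix Filter Topology
open scoped ENNReal NNReal


open Matrix

attribute [local instance] Matrix.linftyOpNormedRing Matrix.linftyOpNormedAlgebra

lemma sqrt_le_specRad {N : ℕ} (i : Fin N) (B : Matrix (Fin N) (Fin N) ℝ)
    (hBpos : ∀ j k, 0 < B j k) (v : Fin N → ℝ) (hv : ∀ j, 0 < v j)
    (c : ℝ) (hc : 0 < c) (hcv : ∀ j, c * v j ≤ (B * B).mulVec v j) :
    Real.sqrt c ≤ specRad B := by
  haveI : Nonempty (Fin N) := ⟨i⟩
  haveI : CompleteSpace (Matrix (Fin N) (Fin N) ℂ) := FiniteDimensional.complete ℂ _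
  set P := B * B with hP
  have hPpos : ∀ j k, 0 < P j k := by
    intro j k
    rw [hP, Matrix.mul_apply]
    exact Finset.sum_pos (fun l _ => mul_pos (hBpos j l) (hBpos l k)) Finset.univ_nonempty
  have hpownn : ∀ (n : ℕ) (j k : Fin N), 0 ≤ (P ^ n) j k := by
    intro n
    induction n with
    | zero => intro j k; by_cases h : j = k <;> simp [Matrix.one_apply, h]
    | succ n ih =>
      intro j k
      rw [pow_succ, Matrix.mul_apply]
      exact Finset.sum_nonneg fun l _ => mul_nonneg (ih j l) (hPpos l k).le
  have hpow : ∀ (n : ℕ) (j : Fin N), c ^ (n + 1) * v j ≤ (P ^ (n + 1)).mulVec v j := by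
    intro n
    induction n with
    | zero => intro j; simpa using hcv j
    | succ n ih =>
      intro j
      have h1 : (P ^ (n + 2)).mulVec v j = ∑ k, P j k * ((P ^ (n + 1)).mulVec v k) := by
        rw [show P ^ (n + 2) = P * P ^ (n + 1) by rw [← pow_succ']]
        rw [← Matrix.mulVec_mulVec]
        simp [Matrix.mulVec, dotProduct]
      rw [h1]
      have h2 : ∑ k, P j k * (c ^ (n + 1) * v k) ≤ ∑ k, P j k * ((P ^ (n + 1)).mulVec v k) :=
        Finset.sum_le_sum fun k _ =>
          mul_le_mul_of_nonneg_left (ih k) (hPpos j k).le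
      have h3 : ∑ k, P j k * (c ^ (n + 1) * v k) = c ^ (n + 1) * (P.mulVec v j) := by
        simp only [Matrix.mulVec, dotProduct, Finset.mul_sum]
        exact Finset.sum_congr rfl fun k _ => by ring
      have h4 : c ^ (n + 2) * v j ≤ c ^ (n + 1) * (P.mulVec v j) := by
        have := mul_le_mul_of_nonneg_left (hcv j) (pow_nonneg hc.le (n + 1))
        calc c ^ (n + 2) * v j = c ^ (n + 1) * (c * v j) := by ring
        _ ≤ c ^ (n + 1) * (P.mulVec v j) := this
      linarith [h3 ▸ h2]
  -- norm lower bound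
  set vmax := Finset.univ.sup' Finset.univ_nonempty v with hvmax
  have hvmaxpos : 0 < vmax := lt_of_lt_of_le (hv i) (Finset.le_sup' v (Finset.mem_univ i))
  set K := v i / vmax with hK
  have hKpos : 0 < K := div_pos (hv i) hvmaxpos
  set M := B.map (Complex.ofReal) with hM
  have hMpow : ∀ n : ℕ, M ^ (2 * (n + 1)) = (P ^ (n + 1)).map (Complex.ofReal) := by
    intro n
    have hBP : B ^ (2 * (n + 1)) = P ^ (n + 1) := by rw [pow_mul, sq, hP]
    calc M ^ (2 * (n + 1)) = ((algebraMap ℝ ℂ).mapMatrix) (B ^ (2 * (n + 1))) :=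
          (map_pow ((algebraMap ℝ ℂ).mapMatrix) B (2 * (n + 1))).symm
      _ = (P ^ (n + 1)).map (Complex.ofReal) := by rw [hBP]; rfl
  have hnorm : ∀ n : ℕ, K * c ^ (n + 1) ≤ ‖M ^ (2 * (n + 1))‖ := by
    intro n
    rw [hMpow n]
    set Q := P ^ (n + 1) with hQ
    have hrow : (∑ k, ‖(Q.map (Complex.ofReal)) i k‖₊ : ℝ≥0) ≤ ‖Q.map (Complex.ofReal)‖₊ := by
      rw [Matrix.linfty_opNNNorm_def]
      exact Finset.le_sup (f := fun r => ∑ k, ‖(Q.map (Complex.ofReal)) r k‖₊) (Finset.mem_univ i)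
    have hsum : ((∑ k, ‖(Q.map (Complex.ofReal)) i k‖₊ : ℝ≥0) : ℝ) = ∑ k, Q i k := by
      push_cast
      refine Finset.sum_congr rfl fun k _ => ?_
      simp [Matrix.map_apply, Complex.norm_real, abs_of_nonneg (show 0 ≤ Q i k from hpownn (n+1) i k)]
    have hlow : K * c ^ (n + 1) ≤ ∑ k, Q i k := by
      have h1 : c ^ (n + 1) * v i ≤ ∑ k, Q i k * v k := by
        have := hpow n i
        simpa [Matrix.mulVec, dotProduct] using this
      have h2 : ∑ k, Q i k * v k ≤ (∑ k, Q i k) * vmax := by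
        rw [Finset.sum_mul]
        exact Finset.sum_le_sum fun k _ =>
          mul_le_mul_of_nonneg_left (Finset.le_sup' v (Finset.mem_univ k)) (hpownn (n+1) i k)
      rw [hK, div_mul_eq_mul_div, div_le_iff₀ hvmaxpos]
      calc v i * c ^ (n + 1) = c ^ (n + 1) * v i := by ring
        _ ≤ ∑ k, Q i k * v k := h1
        _ ≤ (∑ k, Q i k) * vmax := h2
    calc K * c ^ (n + 1) ≤ ∑ k, Q i k := hlow
      _ = ((∑ k, ‖(Q.map (Complex.ofReal)) i k‖₊ : ℝ≥0) : ℝ) := hsum.symm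
      _ ≤ (‖Q.map (Complex.ofReal)‖₊ : ℝ) := NNReal.coe_le_coe.mpr hrow
      _ = ‖Q.map (Complex.ofReal)‖ := rfl
  -- Gelfand's formula
  have hgel : Tendsto (fun m : ℕ => (‖M ^ m‖₊ : ℝ≥0∞) ^ (1 / m : ℝ)) atTop
      (𝓝 (spectralRadius ℂ M)) :=
    spectrum.pow_nnnorm_pow_one_div_tendsto_nhds_spectralRadius M
  have hmono : StrictMono (fun n : ℕ => 2 * (n + 1)) := strictMono_nat_of_lt_succ (fun n => by omega)
  have hsub : Tendsto (fun n : ℕ => (‖M ^ (2 * (n + 1))‖₊ : ℝ≥0∞) ^ (1 / (2 * (n + 1) : ℕ) : ℝ))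
      atTop (𝓝 (spectralRadius ℂ M)) := hgel.comp hmono.tendsto_atTop
  set e : ℕ → ℝ := fun n => 1 / (2 * ((n : ℝ) + 1)) with he
  have hepos : ∀ n, 0 < e n := fun n => by positivity
  set a : ℕ → ℝ := fun n => (K * c ^ (n + 1)) ^ (e n) with ha
  have hle : ∀ n : ℕ, ENNReal.ofReal (a n)
      ≤ (‖M ^ (2 * (n + 1))‖₊ : ℝ≥0∞) ^ (1 / (2 * (n + 1) : ℕ) : ℝ) := by
    intro n
    have hexp : (1 / (2 * (n + 1) : ℕ) : ℝ) = e n := by push_cast; ring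
    rw [hexp]
    show ENNReal.ofReal ((K * c ^ (n + 1)) ^ e n) ≤ (‖M ^ (2 * (n + 1))‖₊ : ℝ≥0∞) ^ e n
    rw [← ENNReal.ofReal_rpow_of_pos (show (0:ℝ) < K * c ^ (n + 1) by positivity)]
    refine ENNReal.rpow_le_rpow ?_ (hepos n).le
    rw [← ENNReal.ofReal_coe_nnreal, coe_nnnorm]
    exact ENNReal.ofReal_le_ofReal (hnorm n)
  have haval : ∀ n, a n = K ^ (e n) * c ^ (1/2 : ℝ) := by
    intro n
    show (K * c ^ (n + 1)) ^ e n = K ^ (e n) * c ^ (1/2 : ℝ)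
    have h1 : (K * c ^ (n + 1)) ^ (e n) = K ^ (e n) * (c ^ (n + 1 : ℕ)) ^ (e n) :=
      Real.mul_rpow hKpos.le (by positivity)
    rw [h1]
    congr 1
    rw [← Real.rpow_natCast c (n + 1), ← Real.rpow_mul hc.le]
    congr 1
    push_cast
    rw [he]
    show ((n:ℝ)+1) * (1/(2*((n:ℝ)+1))) = 1/2
    rw [mul_one_div, div_eq_div_iff (by positivity) (by norm_num : (2:ℝ) ≠ 0)]
    ring
  have he0 : Tendsto e atTop (𝓝 0) := by
    have h2n : Tendsto (fun n : ℕ => (2 * ((n : ℝ) + 1))) atTop atTop := by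
      apply Filter.Tendsto.const_mul_atTop (by norm_num : (0:ℝ) < 2)
      exact tendsto_atTop_add_const_right atTop 1 tendsto_natCast_atTop_atTop
    rw [he]
    simp only [one_div]
    exact h2n.inv_tendsto_atTop
  have hKtend : Tendsto (fun n => K ^ (e n)) atTop (𝓝 1) := by
    have hrw : (fun n => K ^ (e n)) = fun n => Real.exp (Real.log K * e n) := by
      funext n; rw [Real.rpow_def_of_pos hKpos]
    rw [hrw]
    have h1 : Tendsto (fun n => Real.log K * e n) atTop (𝓝 (Real.log K * 0)) :=
      he0.const_mul _
    rw [mul_zero] at h1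
    have h2 := (Real.continuous_exp.tendsto 0).comp h1
    rw [Real.exp_zero] at h2
    exact h2
  have hatend : Tendsto a atTop (𝓝 (Real.sqrt c)) := by
    have := hKtend.mul_const (c ^ (1/2 : ℝ))
    rw [one_mul] at this
    have hsq : c ^ (1/2 : ℝ) = Real.sqrt c := (Real.sqrt_eq_rpow c).symm
    simp only [funext haval]
    rw [← hsq]
    exact this
  have hlowtend : Tendsto (fun n => ENNReal.ofReal (a n)) atTop
      (𝓝 (ENNReal.ofReal (Real.sqrt c))) :=
    (ENNReal.continuous_ofReal.tendsto _).comp hatend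
  have key : ENNReal.ofReal (Real.sqrt c) ≤ spectralRadius ℂ M :=
    le_of_tendsto_of_tendsto' hlowtend hsub hle
  obtain ⟨z, hz, hznorm⟩ := spectrum.exists_nnnorm_eq_spectralRadius (a := M)
  have h1 : ENNReal.ofReal (Real.sqrt c) ≤ (‖z‖₊ : ℝ≥0∞) := hznorm ▸ key
  have h2 : Real.sqrt c ≤ ‖z‖ := by
    rw [← ENNReal.ofReal_coe_nnreal, coe_nnnorm] at h1
    exact (ENNReal.ofReal_le_ofReal_iff (norm_nonneg _)).1 h1
  have hmem : ‖z‖ ∈ (fun z : ℂ => ‖z‖) '' spectrum ℂ M := ⟨z, hz, rfl⟩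
  have hbdd : BddAbove ((fun z : ℂ => ‖z‖) '' spectrum ℂ M) :=
    ((spectrum.isCompact (a := M)).image continuous_norm).bddAbove
  calc Real.sqrt c ≤ ‖z‖ := h2
    _ ≤ specRad B := le_csSup hbdd hmem

theorem stmt13 {N : ℕ} (rows : Fin N → Set (Fin N → ℝ))
    (hne : ∀ i, (rows i).Nonempty) (hcomp : ∀ i, IsCompact (rows i))
    (hpos : ∀ i, ∀ a ∈ rows i, ∀ j, 0 < a j)
    (Atil : Matrix (Fin N) (Fin N) ℝ) (hAtil : Atil ∈ IRU rows)
    (hmax : ∀ A ∈ IRU rows, specRad A ≤ specRad Atil)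
    (vtil : Fin N → ℝ) (hvpos : ∀ i, 0 < vtil i)
    (hev : Atil.mulVec vtil = specRad Atil • vtil) :
    ∀ A ∈ IRU rows, ∀ i, A.mulVec vtil i ≤ specRad Atil * vtil i := by
  intro A hA i
  by_contra hlt
  push_neg at hlt
  haveI : Nonempty (Fin N) := ⟨i⟩
  set ρ := specRad Atil with hρdef
  set B := Atil.updateRow i (A i) with hBdef
  have hB : B ∈ IRU rows := by
    intro j
    by_cases h : j = i
    · subst h; rw [hBdef, Matrix.updateRow_self]; exact hA j
    · rw [hBdef, Matrix.updateRow_ne h]; exact hAtil j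
  have hBpos : ∀ j k, 0 < B j k := fun j k => hpos j _ (hB j) k
  have hevj : ∀ j, Atil.mulVec vtil j = ρ * vtil j := by
    intro j
    rw [hev]; simp
  have hBvne : ∀ j, j ≠ i → B.mulVec vtil j = ρ * vtil j := by
    intro j hj
    have h1 : B.mulVec vtil j = Atil.mulVec vtil j := by
      simp [Matrix.mulVec, hBdef, Matrix.updateRow_ne hj]
    rw [h1, hevj j]
  have hBvi : B.mulVec vtil i = A.mulVec vtil i := by
    simp [Matrix.mulVec, hBdef, Matrix.updateRow_self]
  have hBvge : ∀ j, ρ * vtil j ≤ B.mulVec vtil j := by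
    intro j
    by_cases h : j = i
    · subst h; rw [hBvi]; exact hlt.le
    · rw [hBvne j h]
  have hρpos : 0 < ρ := by
    have h0 : 0 < Atil.mulVec vtil i := by
      have : Atil.mulVec vtil i = ∑ k, Atil i k * vtil k := by
        simp [Matrix.mulVec, dotProduct]
      rw [this]
      exact Finset.sum_pos (fun k _ => mul_pos (hpos i _ (hAtil i) k) (hvpos k))
        Finset.univ_nonempty
    have h1 := hevj i
    nlinarith [hvpos i]
  have hPgt : ∀ j, ρ ^ 2 * vtil j < (B * B).mulVec vtil j := by
    intro j
    have h1 : (B * B).mulVec vtil j = ∑ k, B j k * (B.mulVec vtil k) := by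
      rw [← Matrix.mulVec_mulVec]
      simp [Matrix.mulVec, dotProduct]
    have h2 : ∑ k, B j k * (ρ * vtil k) < ∑ k, B j k * (B.mulVec vtil k) := by
      apply Finset.sum_lt_sum
      · exact fun k _ => mul_le_mul_of_nonneg_left (hBvge k) (hBpos j k).le
      · exact ⟨i, Finset.mem_univ i,
          mul_lt_mul_of_pos_left (by rw [hBvi]; exact hlt) (hBpos j i)⟩
    have h3 : ∑ k, B j k * (ρ * vtil k) = ρ * (B.mulVec vtil j) := by
      simp only [Matrix.mulVec, dotProduct, Finset.mul_sum]
      exact Finset.sum_congr rfl fun k _ => by ring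
    have h4 : ρ ^ 2 * vtil j ≤ ρ * (B.mulVec vtil j) := by
      have := mul_le_mul_of_nonneg_left (hBvge j) hρpos.le
      nlinarith
    rw [h1]
    calc ρ ^ 2 * vtil j ≤ ρ * (B.mulVec vtil j) := h4
      _ = ∑ k, B j k * (ρ * vtil k) := h3.symm
      _ < _ := h2
  set c := Finset.univ.inf' Finset.univ_nonempty
      (fun j => (B * B).mulVec vtil j / vtil j) with hcdef
  have hc2 : ρ ^ 2 < c := by
    rw [hcdef, Finset.lt_inf'_iff]
    intro j _
    exact (lt_div_iff₀ (hvpos j)).2 (hPgt j)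
  have hcpos : 0 < c := lt_of_le_of_lt (sq_nonneg ρ) hc2
  have hcv : ∀ j, c * vtil j ≤ (B * B).mulVec vtil j := by
    intro j
    have h := Finset.inf'_le (fun j => (B * B).mulVec vtil j / vtil j) (Finset.mem_univ j)
    exact (le_div_iff₀ (hvpos j)).1 h
  have hs := sqrt_le_specRad i B hBpos vtil hvpos c hcpos hcv
  have h5 : Real.sqrt c ≤ ρ := le_trans hs (hmax B hB)
  have h6 : Real.sqrt c ^ 2 = c := Real.sq_sqrt hcpos.le
  nlinarith [Real.sqrt_nonneg c]
end

section
/- For a compact IRU-set 𝒜 of strictly positive N×N matrices and α > 0: max_{A∈𝒜} ρ(A) ≤ α if and only if there exists a strictly positive vector v with A·v ≤ α·v componentwise for all A ∈ 𝒜. -/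
open Matrix

lemma my_mem_spectrum_iff {n : ℕ} (M : Matrix (Fin n) (Fin n) ℂ) (μ : ℂ) :
    μ ∈ spectrum ℂ M ↔ ∃ x, x ≠ 0 ∧ M.mulVec x = μ • x := by
  rw [← AlgEquiv.spectrum_eq (Matrix.toLinAlgEquiv' (R := ℂ) (n := Fin n)) M,
    ← Module.End.hasEigenvalue_iff_mem_spectrum]
  rw [Module.End.hasEigenvalue_iff, Submodule.ne_bot_iff]
  constructor
  · rintro ⟨x, hx, hx0⟩
    rw [Module.End.mem_eigenspace_iff, Matrix.toLinAlgEquiv'_apply] at hx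
    exact ⟨x, hx0, hx⟩
  · rintro ⟨x, hx0, hx⟩
    exact ⟨x, by rw [Module.End.mem_eigenspace_iff, Matrix.toLinAlgEquiv'_apply]; exact hx, hx0⟩

lemma specBound {n : ℕ} (A : Matrix (Fin n) (Fin n) ℝ) (hA : ∀ i j, 0 ≤ A i j)
    (v : Fin n → ℝ) (hv : ∀ i, 0 < v i) (β : ℝ)
    (hsub : ∀ i, A.mulVec v i ≤ β * v i) (μ : ℂ)
    (hμ : μ ∈ spectrum ℂ (A.map Complex.ofReal)) : ‖μ‖ ≤ β := by
  obtain ⟨x, hx0, hx⟩ := (my_mem_spectrum_iff _ μ).1 hμ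
  have hn : (Finset.univ : Finset (Fin n)).Nonempty := by
    rcases Nat.eq_zero_or_pos n with h | h
    · subst h; exact absurd (funext fun j => j.elim0) hx0
    · exact ⟨⟨0, h⟩, Finset.mem_univ _⟩
  obtain ⟨i, -, hi⟩ := Finset.exists_max_image Finset.univ
    (fun i => ‖x i‖ / v i) hn
  set c := ‖x i‖ / v i with hc
  have hcle : ∀ j, ‖x j‖ ≤ c * v j := by
    intro j
    have := hi j (Finset.mem_univ _)
    rwa [div_le_iff₀ (hv j)] at this
  have hcpos : 0 < c := by
    obtain ⟨j, hj⟩ := Function.ne_iff.1 hx0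
    have h1 : 0 < ‖x j‖ := by
      exact norm_pos_iff.2 hj
    have h2 : ‖x j‖ / v j ≤ c := hi j (Finset.mem_univ _)
    exact lt_of_lt_of_le (div_pos h1 (hv j)) h2
  have hxi : ‖x i‖ = c * v i := by
    rw [hc, div_mul_cancel₀ _ (ne_of_gt (hv i))]
  have key : ‖μ‖ * (c * v i) ≤ β * (c * v i) := by
    rw [← hxi, ← norm_mul]
    have h1 : μ * x i = (A.map Complex.ofReal).mulVec x i := by
      rw [hx]; simp [Pi.smul_apply, smul_eq_mul]
    rw [h1]
    have h2 : (A.map Complex.ofReal).mulVec x i = ∑ j, (A i j : ℂ) * x j := by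
      simp [Matrix.mulVec, dotProduct, Matrix.map_apply]
    rw [h2]
    calc ‖∑ j, (A i j : ℂ) * x j‖
        ≤ ∑ j, ‖(A i j : ℂ) * x j‖ := by
          exact norm_sum_le _ _
      _ = ∑ j, A i j * ‖x j‖ := by
          apply Finset.sum_congr rfl; intro j _
          rw [norm_mul, Complex.norm_real, Real.norm_of_nonneg (hA i j)]
      _ ≤ ∑ j, A i j * (c * v j) := by
          apply Finset.sum_le_sum; intro j _
          exact mul_le_mul_of_nonneg_left (hcle j) (hA i j)
      _ = c * A.mulVec v i := by
          rw [Matrix.mulVec, dotProduct, Finset.mul_sum]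
          apply Finset.sum_congr rfl; intro j _; ring
      _ ≤ c * (β * v i) := mul_le_mul_of_nonneg_left (hsub i) (le_of_lt hcpos)
      _ = β * (c * v i) := by ring
      _ = β * ‖x i‖ := by rw [hxi]
  exact le_of_mul_le_mul_right key (mul_pos hcpos (hv i))

lemma exists_subeig {N : ℕ} (hN : 0 < N) (rows : Fin N → Set (Fin N → ℝ))
    (hne : ∀ i, (rows i).Nonempty) (hcomp : ∀ i, IsCompact (rows i))
    (hpos : ∀ i, ∀ a ∈ rows i, ∀ j, 0 < a j) :
    ∃ (v : Fin N → ℝ) (lam : ℝ) (A : Matrix (Fin N) (Fin N) ℝ),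
      (∀ i, 0 < v i) ∧ 0 ≤ lam ∧ A ∈ IRU rows ∧
      (∀ i, A.mulVec v i = lam * v i) ∧
      ∀ B ∈ IRU rows, ∀ i, B.mulVec v i ≤ lam * v i := by
  haveI : NeZero N := ⟨hN.ne'⟩
  have huniv : (Finset.univ : Finset (Fin N)).Nonempty := ⟨⟨0, hN⟩, Finset.mem_univ _⟩
  have hNpos : (0:ℝ) < N := Nat.cast_pos.2 hN
  -- upper bound M₀ on entries
  have hMex : ∀ i : Fin N, ∃ Mi : ℝ, ∀ a ∈ rows i, ∀ j, a j ≤ Mi := by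
    intro i
    obtain ⟨a₀, ha₀, hmax⟩ := (hcomp i).exists_isMaxOn (hne i)
      (continuous_finset_sum Finset.univ fun j _ => continuous_apply j).continuousOn
    refine ⟨∑ j, a₀ j, fun a ha j => ?_⟩
    calc a j ≤ ∑ k, a k := Finset.single_le_sum
          (fun k _ => (hpos i a ha k).le) (Finset.mem_univ j)
      _ ≤ ∑ k, a₀ k := isMaxOn_iff.mp hmax a ha
  choose Mb hMb using hMex
  set M₀ : ℝ := Finset.univ.sup' huniv Mb with hM₀def
  have hM₀ : ∀ i, ∀ a ∈ rows i, ∀ j, a j ≤ M₀ := fun i a ha j =>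
    (hMb i a ha j).trans (Finset.le_sup' Mb (Finset.mem_univ i))
  have hM₀pos : 0 < M₀ := by
    obtain ⟨a, ha⟩ := hne ⟨0, hN⟩
    exact lt_of_lt_of_le (hpos _ a ha ⟨0, hN⟩) (hM₀ _ a ha _)
  -- lower bound m₀
  have hmex : ∀ i j : Fin N, ∃ mij : ℝ, 0 < mij ∧ ∀ a ∈ rows i, mij ≤ a j := by
    intro i j
    obtain ⟨a₀, ha₀, hmin⟩ := (hcomp i).exists_isMinOn (hne i)
      (continuous_apply j).continuousOn
    exact ⟨a₀ j, hpos i a₀ ha₀ j, fun a ha => isMinOn_iff.mp hmin a ha⟩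
  choose mb hmbpos hmb using hmex
  have hunivP : (Finset.univ : Finset (Fin N × Fin N)).Nonempty :=
    ⟨⟨⟨0, hN⟩, ⟨0, hN⟩⟩, Finset.mem_univ _⟩
  set m₀ : ℝ := Finset.univ.inf' hunivP (fun p : Fin N × Fin N => mb p.1 p.2) with hm₀def
  have hm₀pos : 0 < m₀ := by
    rw [hm₀def, Finset.lt_inf'_iff]
    exact fun p _ => hmbpos p.1 p.2
  have hm₀ : ∀ i, ∀ a ∈ rows i, ∀ j, m₀ ≤ a j := fun i a ha j =>
    le_trans (Finset.inf'_le _ (Finset.mem_univ (⟨i, j⟩ : Fin N × Fin N))) (hmb i j a ha)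
  -- the max operator T
  have hTex : ∀ (v : Fin N → ℝ) (i : Fin N), ∃ a, a ∈ rows i ∧ ∀ b ∈ rows i, b ⬝ᵥ v ≤ a ⬝ᵥ v := by
    intro v i
    obtain ⟨a, ha, hmax⟩ := (hcomp i).exists_isMaxOn (hne i)
      (continuous_finset_sum Finset.univ fun j _ => (continuous_apply j).mul continuous_const).continuousOn
    exact ⟨a, ha, fun b hb => isMaxOn_iff.mp hmax b hb⟩
  choose amax hamem hamax using hTex
  set T : (Fin N → ℝ) → Fin N → ℝ := fun v i => amax v i ⬝ᵥ v with hTdef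
  have hTle : ∀ v i, ∀ b ∈ rows i, b ⬝ᵥ v ≤ T v i := fun v i => hamax v i
  have hTlow : ∀ (v : Fin N → ℝ), (∀ j, 0 ≤ v j) → ∀ i, m₀ * ∑ j, v j ≤ T v i := by
    intro v hv i
    calc m₀ * ∑ j, v j = ∑ j, m₀ * v j := Finset.mul_sum _ _ _
      _ ≤ ∑ j, amax v i j * v j := Finset.sum_le_sum fun j _ =>
          mul_le_mul_of_nonneg_right (hm₀ i _ (hamem v i) j) (hv j)
      _ = T v i := rfl
  have hTup : ∀ (v : Fin N → ℝ), (∀ j, 0 ≤ v j) → ∀ i, T v i ≤ M₀ * ∑ j, v j := by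
    intro v hv i
    calc T v i = ∑ j, amax v i j * v j := rfl
      _ ≤ ∑ j, M₀ * v j := Finset.sum_le_sum fun j _ =>
          mul_le_mul_of_nonneg_right (hM₀ i _ (hamem v i) j) (hv j)
      _ = M₀ * ∑ j, v j := (Finset.mul_sum _ _ _).symm
  -- one-sided Lipschitz bound for T
  have hTdiff : ∀ u v : Fin N → ℝ, ∀ i, T u i ≤ T v i + M₀ * ∑ j, |u j - v j| := by
    intro u v i
    have key : T u i = (∑ j, amax u i j * v j) + ∑ j, amax u i j * (u j - v j) := by
      show amax u i ⬝ᵥ u = _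
      rw [dotProduct, ← Finset.sum_add_distrib]
      apply Finset.sum_congr rfl; intro j _; ring
    rw [key]
    have h1 : (∑ j, amax u i j * v j) ≤ T v i := hTle v i _ (hamem u i)
    have h2 : (∑ j, amax u i j * (u j - v j)) ≤ M₀ * ∑ j, |u j - v j| := by
      rw [Finset.mul_sum]
      apply Finset.sum_le_sum; intro j _
      calc amax u i j * (u j - v j) ≤ amax u i j * |u j - v j| :=
            mul_le_mul_of_nonneg_left (le_abs_self _) (hpos i _ (hamem u i) j).le
        _ ≤ M₀ * |u j - v j| :=
            mul_le_mul_of_nonneg_right (hM₀ i _ (hamem u i) j) (abs_nonneg _)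
    exact add_le_add h1 h2
  have hTcont : ∀ i, Continuous fun v => T v i := by
    intro i
    have hlip : LipschitzWith (Real.toNNReal (M₀ * N)) (fun v => T v i) := by
      apply LipschitzWith.of_dist_le_mul
      intro u v
      have hsum : ∀ u v : Fin N → ℝ, (∑ j, |u j - v j|) ≤ N * dist u v := by
        intro u v
        calc (∑ j, |u j - v j|) = ∑ j : Fin N, dist (u j) (v j) := by
              simp [Real.dist_eq]
          _ ≤ ∑ _j : Fin N, dist u v := Finset.sum_le_sum fun j _ => dist_le_pi_dist u v j
          _ = N * dist u v := by simp [Finset.sum_const, nsmul_eq_mul]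
      have h1 : T u i - T v i ≤ M₀ * N * dist u v := by
        have := hTdiff u v i
        have h2 := mul_le_mul_of_nonneg_left (hsum u v) hM₀pos.le
        calc T u i - T v i ≤ M₀ * ∑ j, |u j - v j| := by linarith
          _ ≤ M₀ * (N * dist u v) := h2
          _ = M₀ * N * dist u v := by ring
      have h1' : T v i - T u i ≤ M₀ * N * dist u v := by
        have := hTdiff v u i
        have hsum' := hsum v u
        have h2 := mul_le_mul_of_nonneg_left hsum' hM₀pos.le
        have hdd : dist v u = dist u v := dist_comm v u
        calc T v i - T u i ≤ M₀ * ∑ j, |v j - u j| := by linarith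
          _ ≤ M₀ * (N * dist v u) := h2
          _ = M₀ * N * dist u v := by rw [hdd]; ring
      rw [Real.dist_eq, Real.coe_toNNReal _ (by positivity)]
      exact abs_sub_le_iff.2 ⟨h1, h1'⟩
    exact hlip.continuous
  -- the compact search space
  set δ : ℝ := min (1 / N) (m₀ / (N * M₀)) with hδdef
  have hδpos : 0 < δ := lt_min (by positivity) (by positivity)
  have hδN : δ ≤ 1 / N := min_le_left _ _
  have hδm : (N : ℝ) * M₀ * δ ≤ m₀ := by
    have h := min_le_right (1 / (N:ℝ)) (m₀ / (N * M₀))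
    calc (N:ℝ) * M₀ * δ ≤ N * M₀ * (m₀ / (N * M₀)) := by
          apply mul_le_mul_of_nonneg_left (hδdef ▸ h) (by positivity)
      _ = m₀ := by field_simp
  set K : Set (Fin N → ℝ) := {v | (∀ i, δ ≤ v i) ∧ ∑ j, v j = 1} with hKdef
  have hKsub : ∀ v ∈ K, ∀ i, v i ∈ Set.Icc δ 1 := by
    rintro v ⟨h1, h2⟩ i
    refine ⟨h1 i, ?_⟩
    calc v i ≤ ∑ j, v j := Finset.single_le_sum
          (fun j _ => (hδpos.le.trans (h1 j))) (Finset.mem_univ i)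
      _ = 1 := h2
  have hKclosed : IsClosed K := by
    have : K = (⋂ i, {v : Fin N → ℝ | δ ≤ v i}) ∩ {v | ∑ j, v j = 1} := by
      ext v; simp [hKdef, Set.mem_iInter]
    rw [this]
    exact (isClosed_iInter fun i => isClosed_le continuous_const (continuous_apply i)).inter
      (isClosed_eq (continuous_finset_sum Finset.univ fun j _ => continuous_apply j)
        continuous_const)
  have hKcomp : IsCompact K := by
    have hsub : K ⊆ Set.pi Set.univ (fun _ : Fin N => Set.Icc δ 1) :=
      fun v hv => Set.mem_univ_pi.2 fun i => hKsub v hv i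
    exact IsCompact.of_isClosed_subset (isCompact_univ_pi fun _ => isCompact_Icc) hKclosed hsub
  set B : ℝ := max ((N : ℝ) * M₀) (M₀ / δ) with hBdef
  set S : Set ((Fin N → ℝ) × ℝ) :=
    {p | p.1 ∈ K ∧ p.2 ∈ Set.Icc 0 B ∧ ∀ i, T p.1 i ≤ p.2 * p.1 i} with hSdef
  have hSclosed : IsClosed S := by
    have : S = (Prod.fst ⁻¹' K) ∩ ((Prod.snd ⁻¹' Set.Icc 0 B) ∩
        ⋂ i, {p : (Fin N → ℝ) × ℝ | T p.1 i ≤ p.2 * p.1 i}) := by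
      ext p; simp [hSdef, Set.mem_iInter, and_assoc]
    rw [this]
    refine (hKclosed.preimage continuous_fst).inter
      ((isClosed_Icc.preimage continuous_snd).inter (isClosed_iInter fun i => ?_))
    exact isClosed_le ((hTcont i).comp continuous_fst)
      (continuous_snd.mul ((continuous_apply i).comp continuous_fst))
  have hScomp : IsCompact S :=
    IsCompact.of_isClosed_subset (hKcomp.prod isCompact_Icc) hSclosed
      fun p hp => Set.mk_mem_prod hp.1 hp.2.1
  -- base point
  set v₀ : Fin N → ℝ := fun _ => 1 / N with hv₀def
  have hv₀sum : ∑ j, v₀ j = 1 := by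
    rw [hv₀def, Finset.sum_const, Finset.card_univ, Fintype.card_fin, nsmul_eq_mul]
    field_simp
  have hv₀K : v₀ ∈ K := ⟨fun i => hδN, hv₀sum⟩
  have hp₀S : ((v₀, (N : ℝ) * M₀) : (Fin N → ℝ) × ℝ) ∈ S := by
    refine ⟨hv₀K, ⟨by positivity, le_max_left _ _⟩, fun i => ?_⟩
    calc T v₀ i ≤ M₀ * ∑ j, v₀ j := hTup v₀ (fun j => by rw [hv₀def]; positivity) i
      _ = M₀ := by rw [hv₀sum, mul_one]
      _ = (N : ℝ) * M₀ * v₀ i := by rw [hv₀def]; field_simp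
  obtain ⟨p, hpS, hmin⟩ := hScomp.exists_isMinOn ⟨_, hp₀S⟩ continuous_snd.continuousOn
  obtain ⟨hvK, hlamIcc, hsubeig⟩ := hpS
  set vs : Fin N → ℝ := p.1 with hvsdef
  set lam : ℝ := p.2 with hlamdef
  have hminle : ∀ q ∈ S, lam ≤ q.2 := fun q hq => isMinOn_iff.mp hmin q hq
  have hlamNM : lam ≤ (N:ℝ) * M₀ := hminle _ hp₀S
  have hvpos : ∀ i, 0 < vs i := fun i => lt_of_lt_of_le hδpos (hvK.1 i)
  have hvsum : ∑ j, vs j = 1 := hvK.2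
  have hlam0 : 0 ≤ lam := hlamIcc.1
  have hEq : ∀ i, T vs i = lam * vs i := by
    by_contra hcon
    push_neg at hcon
    obtain ⟨j, hj⟩ := hcon
    have hjlt : T vs j < lam * vs j := lt_of_le_of_ne (hsubeig j) hj
    set w : Fin N → ℝ := fun i => T vs i with hwdef
    have hwpos : ∀ i, 0 < w i := by
      intro i
      have h := hTlow vs (fun j => (hvpos j).le) i
      rw [hvsum, mul_one] at h
      exact lt_of_lt_of_le hm₀pos h
    have hstrict : ∀ i, T w i < lam * w i := by
      intro i
      have ha := hamem w i
      have h2 : (∑ k, amax w i k * w k) < ∑ k, amax w i k * (lam * vs k) := by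
        apply Finset.sum_lt_sum
        · intro k _
          exact mul_le_mul_of_nonneg_left (hsubeig k) (hpos i _ ha k).le
        · exact ⟨j, Finset.mem_univ j, mul_lt_mul_of_pos_left hjlt (hpos i _ ha j)⟩
      have h3 : (∑ k, amax w i k * (lam * vs k)) = lam * (amax w i ⬝ᵥ vs) := by
        rw [dotProduct, Finset.mul_sum]
        apply Finset.sum_congr rfl; intro k _; ring
      have h4 : lam * (amax w i ⬝ᵥ vs) ≤ lam * T vs i :=
        mul_le_mul_of_nonneg_left (hTle vs i _ ha) hlam0
      calc T w i = ∑ k, amax w i k * w k := rfl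
        _ < ∑ k, amax w i k * (lam * vs k) := h2
        _ = lam * (amax w i ⬝ᵥ vs) := h3
        _ ≤ lam * T vs i := h4
        _ = lam * w i := rfl
    set s : ℝ := ∑ j, w j with hsdef
    have hspos : 0 < s := Finset.sum_pos (fun j _ => hwpos j) huniv
    set w' : Fin N → ℝ := fun i => w i / s with hw'def
    have hw'pos : ∀ i, 0 < w' i := fun i => div_pos (hwpos i) hspos
    have hw'sum : ∑ j, w' j = 1 := by
      rw [hw'def, ← Finset.sum_div, ← hsdef, div_self hspos.ne']
    have hdotdiv : ∀ a : Fin N → ℝ, a ⬝ᵥ w' = (a ⬝ᵥ w) / s := by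
      intro a
      rw [dotProduct, dotProduct, Finset.sum_div]
      apply Finset.sum_congr rfl; intro k _
      rw [hw'def]; ring
    have hTw' : ∀ i, T w' i = T w i / s := by
      intro i
      apply le_antisymm
      · calc T w' i = (amax w' i ⬝ᵥ w) / s := hdotdiv _
          _ ≤ T w i / s := by
              apply div_le_div_of_nonneg_right (hTle w i _ (hamem w' i)) hspos.le
      · calc T w i / s = amax w i ⬝ᵥ w' := (hdotdiv _).symm
          _ ≤ T w' i := hTle w' i _ (hamem w i)
    have hstrict' : ∀ i, T w' i < lam * w' i := by
      intro i
      rw [hTw']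
      have h1 : T w i / s < (lam * w i) / s :=
        div_lt_div_of_pos_right (hstrict i) hspos
      calc T w i / s < (lam * w i) / s := h1
        _ = lam * (w i / s) := by ring
        _ = lam * w' i := rfl
    by_cases hcase : ∀ i, δ ≤ w' i
    · set t' : ℝ := Finset.univ.sup' huniv (fun i => T w' i / w' i) with ht'def
      have ht'mem : ∀ i, T w' i / w' i ≤ t' := fun i =>
        Finset.le_sup' (fun i => T w' i / w' i) (Finset.mem_univ i)
      have ht'ge : ∀ i, T w' i ≤ t' * w' i := fun i =>
        (div_le_iff₀ (hw'pos i)).1 (ht'mem i)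
      have ht'lt : t' < lam := by
        rw [ht'def, Finset.sup'_lt_iff]
        intro i _
        exact (div_lt_iff₀ (hw'pos i)).2 (hstrict' i)
      have hTw'nonneg : ∀ i, 0 ≤ T w' i := by
        intro i
        have h := hTlow w' (fun j => (hw'pos j).le) i
        rw [hw'sum, mul_one] at h
        exact le_trans hm₀pos.le h
      have ht'0 : 0 ≤ t' :=
        le_trans (div_nonneg (hTw'nonneg ⟨0, hN⟩) (hw'pos ⟨0, hN⟩).le) (ht'mem ⟨0, hN⟩)
      have ht'B : t' ≤ B := by
        rw [ht'def]
        apply Finset.sup'_le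
        intro i _
        have h1 : T w' i ≤ M₀ := by
          have h := hTup w' (fun j => (hw'pos j).le) i
          rwa [hw'sum, mul_one] at h
        exact (div_le_div₀ hM₀pos.le h1 hδpos (hcase i)).trans (le_max_right _ _)
      have hmem : ((w', t') : (Fin N → ℝ) × ℝ) ∈ S := ⟨⟨hcase, hw'sum⟩, ⟨ht'0, ht'B⟩, ht'ge⟩
      exact absurd (hminle _ hmem) (not_le.2 ht'lt)
    · push_neg at hcase
      obtain ⟨i, hi⟩ := hcase
      have h1 : m₀ ≤ T w' i := by
        have h := hTlow w' (fun j => (hw'pos j).le) i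
        rwa [hw'sum, mul_one] at h
      have h2 : T w' i < lam * w' i := hstrict' i
      have h3 : lam * w' i ≤ lam * δ := mul_le_mul_of_nonneg_left hi.le hlam0
      have h4 : lam * δ ≤ (N:ℝ) * M₀ * δ := mul_le_mul_of_nonneg_right hlamNM hδpos.le
      linarith [hδm]
  refine ⟨vs, lam, Matrix.of (fun i => amax vs i), hvpos, hlam0, fun i => hamem vs i, ?_, ?_⟩
  · intro i
    show amax vs i ⬝ᵥ vs = lam * vs i
    exact hEq i
  · intro Bm hBm i
    show Bm i ⬝ᵥ vs ≤ lam * vs i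
    exact (hTle vs i _ (hBm i)).trans (hEq i).le

theorem stmt14 {N : ℕ} (rows : Fin N → Set (Fin N → ℝ))
    (hne : ∀ i, (rows i).Nonempty) (hcomp : ∀ i, IsCompact (rows i))
    (hpos : ∀ i, ∀ a ∈ rows i, ∀ j, 0 < a j) (α : ℝ) (hα : 0 < α) :
    (∀ A ∈ IRU rows, specRad A ≤ α) ↔
      ∃ v : Fin N → ℝ, (∀ i, 0 < v i) ∧ ∀ A ∈ IRU rows, ∀ i, A.mulVec v i ≤ α * v i := by
  constructor
  · intro hspec
    rcases Nat.eq_zero_or_pos N with h0 | hN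
    · subst h0
      exact ⟨fun _ => 1, fun i => i.elim0, fun A _ i => i.elim0⟩
    · obtain ⟨v, lam, A, hv, hlam0, hAIRU, hAeq, hBle⟩ :=
        exists_subeig hN rows hne hcomp hpos
      have hbdd : ∀ x ∈ (fun z : ℂ => ‖z‖) '' spectrum ℂ (A.map Complex.ofReal), x ≤ lam := by
        rintro x ⟨μ, hμ, rfl⟩
        exact specBound A (fun i j => (hpos i _ (hAIRU i) j).le) v hv lam
          (fun i => (hAeq i).le) μ hμ
      have hlamspec : lam ∈ (fun z : ℂ => ‖z‖) '' spectrum ℂ (A.map Complex.ofReal) := by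
        refine ⟨(lam : ℂ), ?_, by simp [abs_of_nonneg hlam0]⟩
        rw [my_mem_spectrum_iff]
        refine ⟨fun j => (v j : ℂ), ?_, ?_⟩
        · intro h
          have h2 := congrFun h ⟨0, hN⟩
          rw [Pi.zero_apply, Complex.ofReal_eq_zero] at h2
          exact absurd h2 (ne_of_gt (hv ⟨0, hN⟩))
        · funext i
          have h : ∑ j, A i j * v j = lam * v i := hAeq i
          show ∑ j, (A i j : ℂ) * (v j : ℂ) = _
          rw [Pi.smul_apply, smul_eq_mul]
          exact_mod_cast h
      have hlamle : lam ≤ specRad A := le_csSup ⟨lam, fun x hx => hbdd x hx⟩ hlamspec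
      have hlamα : lam ≤ α := hlamle.trans (hspec A hAIRU)
      exact ⟨v, hv, fun B hB i => (hBle B hB i).trans
        (mul_le_mul_of_nonneg_right hlamα (hv i).le)⟩
  · rintro ⟨v, hv, hsub⟩ A hA
    apply Real.sSup_le
    · rintro x ⟨μ, hμ, rfl⟩
      exact specBound A (fun i j => (hpos i _ (hA i) j).le) v hv α (hsub A hA) μ hμ
    · exact hα.le
end
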